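/- arXiv:0808.3597 — 5 statements merged into one kernel-verified Lean document; each statement's English description precedes it below -/
import Mathlib

section
/- Let p be a permutation of Z_d and let ρ be a Hermitian d²×d² complex matrix supported in M_p. Then ρ is positive semidefinite if and only if for every x ∈ Z_d the d×d matrix A^x with entries A^x_{j,k} = ρ_{j (p(j)+x), k (p(k)+x)} (j,k ∈ Z_d) is positive semidefinite. -/
open scoped ComplexOrder
open Matrix Finset

private lemma quad_decomp (d : ℕ) [NeZero d] (p : Equiv.Perm (ZMod d))
    (ρ : Matrix (ZMod d × ZMod d) (ZMod d × ZMod d) ℂ)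
    (hsupp : ∀ j1 j2 k1 k2 : ZMod d, j2 - p j1 ≠ k2 - p k1 → ρ (j1, j2) (k1, k2) = 0)
    (w : ZMod d × ZMod d → ℂ) :
    star w ⬝ᵥ ρ *ᵥ w =
      ∑ x : ZMod d,
        star (fun j => w (j, p j + x)) ⬝ᵥ
          (Matrix.of fun j k : ZMod d => ρ (j, p j + x) (k, p k + x)) *ᵥ
          (fun j => w (j, p j + x)) := by
  classical
  let e : (ZMod d × ZMod d) ≃ (ZMod d × ZMod d) :=
    { toFun := fun q => (q.2, p q.2 + q.1)
      invFun := fun a => (a.2 - p a.1, a.1)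
      left_inv := by intro q; simp
      right_inv := by intro a; simp }
  have lhs : star w ⬝ᵥ ρ *ᵥ w =
      ∑ a : ZMod d × ZMod d, ∑ b : ZMod d × ZMod d,
        star (w a) * (ρ a b * w b) := by
    simp [dotProduct, Matrix.mulVec, Finset.mul_sum]
  rw [lhs]
  have h1 : ∀ g : (ZMod d × ZMod d) → ℂ,
      ∑ a : ZMod d × ZMod d, g a = ∑ x : ZMod d, ∑ j : ZMod d, g (j, p j + x) := by
    intro g
    rw [← Equiv.sum_comp e g, Fintype.sum_prod_type]
    rfl
  rw [h1]
  refine Finset.sum_congr rfl fun x _ => ?_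
  simp only [dotProduct, Matrix.mulVec, Matrix.of_apply, Pi.star_apply,
    Finset.mul_sum]
  refine Finset.sum_congr rfl fun j _ => ?_
  rw [h1]
  rw [Finset.sum_eq_single x]
  · exact fun y _ hy => Finset.sum_eq_zero fun k _ => by
      rw [hsupp j (p j + x) k (p k + y) (by simpa using (Ne.symm hy)), zero_mul, mul_zero]
  · intro h; exact absurd (Finset.mem_univ x) h

/-- Let `p` be a permutation of `Z_d` and `ρ` a Hermitian
`d²×d²` complex matrix supported in `M_p` (i.e. `ρ_{j1 j2, k1 k2} = 0` whenever
`j2 − p(j1) ≠ k2 − p(k1)`).  Then `ρ` is positive semidefinite iff for every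
`x ∈ Z_d` the `d×d` matrix `A^x` with entries
`A^x_{j,k} = ρ_{j (p(j)+x), k (p(k)+x)}` is positive semidefinite. -/
theorem posSemidef_iff_blocks (d : ℕ) [NeZero d] (hd : 2 ≤ d)
    (p : Equiv.Perm (ZMod d))
    (ρ : Matrix (ZMod d × ZMod d) (ZMod d × ZMod d) ℂ)
    (hherm : ρ.IsHermitian)
    (hsupp : ∀ j1 j2 k1 k2 : ZMod d, j2 - p j1 ≠ k2 - p k1 → ρ (j1, j2) (k1, k2) = 0) :
    ρ.PosSemidef ↔
      ∀ x : ZMod d,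
        (Matrix.of fun j k : ZMod d => ρ (j, p j + x) (k, p k + x)).PosSemidef := by
  classical
  constructor
  · intro hpsd x
    refine Matrix.PosSemidef.of_dotProduct_mulVec_nonneg ?_ ?_
    · ext j k
      simp only [Matrix.conjTranspose_apply, Matrix.of_apply]
      exact hherm.apply _ _
    · intro v
      set w : ZMod d × ZMod d → ℂ := fun a => if a.2 = p a.1 + x then v a.1 else 0 with hw
      have := hpsd.dotProduct_mulVec_nonneg w
      rw [quad_decomp d p ρ hsupp w] at this
      have hcollapse : ∀ y : ZMod d, y ≠ x →
          (star (fun j => w (j, p j + y)) ⬝ᵥ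
            (Matrix.of fun j k : ZMod d => ρ (j, p j + y) (k, p k + y)) *ᵥ
            (fun j => w (j, p j + y))) = 0 := by
        intro y hy
        have hv : (fun j => w (j, p j + y)) = (0 : ZMod d → ℂ) := by
          funext j
          show (if p j + y = p j + x then v j else 0) = 0
          exact if_neg fun h => hy (add_left_cancel h)
        rw [hv]
        simp
      rw [Finset.sum_eq_single x (fun y _ hy => hcollapse y hy)
        (fun h => absurd (Finset.mem_univ x) h)] at this
      have hvx : (fun j => w (j, p j + x)) = v := by
        funext j; simp [hw]
      rwa [hvx] at this
  · intro hA
    refine Matrix.PosSemidef.of_dotProduct_mulVec_nonneg hherm fun w => ?_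
    rw [quad_decomp d p ρ hsupp w]
    exact Finset.sum_nonneg fun x _ => (hA x).dotProduct_mulVec_nonneg _
end

section
/- Let p be a permutation of Z_d with p(0) = 0 and let ρ be a bipartite density supported in M_p. Then ρ is PPT if and only if for every y ∈ Z_d the d×d matrix B^y with entries B^y_{j,k} = ρ_{j (y−p(k)), k (y−p(j))} (j,k ∈ Z_d) is positive semidefinite. -/
open scoped ComplexOrder

open Matrix in
private lemma posSemidef_blockDiagonal_iff' {n o : Type*} [Fintype n] [Fintype o]
    [DecidableEq n] [DecidableEq o] (B : o → Matrix n n ℂ) :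
    (blockDiagonal B).PosSemidef ↔ ∀ y, (B y).PosSemidef := by
  constructor
  · intro h y
    have := h.submatrix (fun j : n => (j, y))
    convert this using 2
    ext j k
    simp [blockDiagonal_apply]
  · intro h
    refine PosSemidef.of_dotProduct_mulVec_nonneg ?_ ?_
    · rw [IsHermitian, blockDiagonal_conjTranspose]
      exact congrArg _ (funext fun y => (h y).1)
    · intro x
      have key : star x ⬝ᵥ (blockDiagonal B *ᵥ x) =
          ∑ y, star (fun j => x (j, y)) ⬝ᵥ (B y *ᵥ fun j => x (j, y)) := by
        simp only [dotProduct, mulVec, Fintype.sum_prod_type, Pi.star_apply,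
          blockDiagonal_apply, ite_mul, zero_mul, Finset.sum_ite_eq,
          Finset.mem_univ, if_true]
        rw [Finset.sum_comm]
      rw [key]
      exact Finset.sum_nonneg fun y _ => (h y).dotProduct_mulVec_nonneg _

/-- Let `p` be a permutation of `Z_d` with `p(0) = 0` and `ρ` a
bipartite density (positive semidefinite, trace one) supported in `M_p`.  Then
`ρ` is PPT (its partial transposition `(ρ^τ)_{j1 j2, k1 k2} = ρ_{j1 k2, k1 j2}`
is positive semidefinite) iff for every `y ∈ Z_d` the `d×d` matrix `B^y` with
entries `B^y_{j,k} = ρ_{j (y−p(k)), k (y−p(j))}` is positive semidefinite. -/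
theorem ppt_iff_blocks (d : ℕ) [NeZero d] (hd : 2 ≤ d)
    (p : Equiv.Perm (ZMod d)) (hp0 : p 0 = 0)
    (ρ : Matrix (ZMod d × ZMod d) (ZMod d × ZMod d) ℂ)
    (hρ : ρ.PosSemidef ∧ ρ.trace = 1)
    (hsupp : ∀ j1 j2 k1 k2 : ZMod d, j2 - p j1 ≠ k2 - p k1 → ρ (j1, j2) (k1, k2) = 0) :
    (Matrix.of fun jk uv : ZMod d × ZMod d => ρ (jk.1, uv.2) (uv.1, jk.2)).PosSemidef ↔
      ∀ y : ZMod d,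
        (Matrix.of fun j k : ZMod d => ρ (j, y - p k) (k, y - p j)).PosSemidef := by
  classical
  set B : ZMod d → Matrix (ZMod d) (ZMod d) ℂ :=
    fun y => Matrix.of fun j k : ZMod d => ρ (j, y - p k) (k, y - p j) with hB
  let e : (ZMod d × ZMod d) ≃ (ZMod d × ZMod d) :=
    { toFun := fun q => (q.1, q.2 + p q.1)
      invFun := fun q => (q.1, q.2 - p q.1)
      left_inv := fun q => by simp
      right_inv := fun q => by simp }
  have hT : (Matrix.of fun jk uv : ZMod d × ZMod d => ρ (jk.1, uv.2) (uv.1, jk.2)) =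
      (Matrix.blockDiagonal B).submatrix e e := by
    ext ⟨j1, j2⟩ ⟨k1, k2⟩
    simp only [Matrix.of_apply, Matrix.submatrix_apply, Matrix.blockDiagonal_apply,
      Equiv.coe_fn_mk, e, hB]
    by_cases h : j2 + p j1 = k2 + p k1
    · rw [if_pos h]
      have h1 : j2 + p j1 - p k1 = k2 := by rw [h]; ring
      have h2 : j2 + p j1 - p j1 = j2 := by ring
      rw [h1, h2]
    · rw [if_neg h]
      apply hsupp
      intro hc
      apply h
      have : k2 = j2 - p k1 + p j1 := by
        rw [← hc]; ring
      rw [this]; ring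
  rw [hT, Matrix.posSemidef_submatrix_equiv, posSemidef_blockDiagonal_iff']
end

section
/- Let ρ be a bipartite density on C^d ⊗ C^d and for u1,v1,u2,v2 ∈ Z_d set s_{(u1,u2),(v1,v2)} = Tr((S_{u1,v1} ⊗ S_{u2,v2})† ρ). If Σ_{u1,v1,u2,v2 ∈ Z_d} |s_{(u1,u2),(v1,v2)}| ≤ 2, then ρ is separable. -/
open Matrix Kronecker
open scoped ComplexOrder
set_option linter.unusedSectionVars false
set_option maxHeartbeats 1600000

/-- `η = exp(2πi/d)`. -/
noncomputable def eta (d : ℕ) : ℂ := Complex.exp (2 * Real.pi * Complex.I / d)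

/-- The generalized spin matrix `S_{j,k} = Σ_m η^{jm} |m⟩⟨m+k|`. -/
noncomputable def spinS (d : ℕ) (j k : ZMod d) : Matrix (ZMod d) (ZMod d) ℂ :=
  Matrix.of fun m n => if n = m + k then eta d ^ (j.val * m.val) else 0

/-- A bipartite density on `C^d ⊗ C^d` is separable if it is a finite convex
combination of Kronecker products of `d×d` densities. -/
def IsSeparableState {d : ℕ} [NeZero d]
    (ρ : Matrix (ZMod d × ZMod d) (ZMod d × ZMod d) ℂ) : Prop :=
  ∃ (n : ℕ) (w : Fin n → ℝ) (σ τ : Fin n → Matrix (ZMod d) (ZMod d) ℂ),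
    (∀ i, 0 ≤ w i) ∧ (∑ i, w i = 1) ∧
    (∀ i, (σ i).PosSemidef ∧ (σ i).trace = 1) ∧
    (∀ i, (τ i).PosSemidef ∧ (τ i).trace = 1) ∧
    ρ = ∑ i, (w i : ℂ) • (σ i ⊗ₖ τ i)

noncomputable def chi (d : ℕ) [NeZero d] (x : ZMod d) : ℂ := eta d ^ x.val



section chi
variable {d : ℕ} [NeZero d]


lemma eta_prim : IsPrimitiveRoot (eta d) d := Complex.isPrimitiveRoot_exp d (NeZero.ne d)

lemma eta_pow_d : eta d ^ d = 1 := eta_prim.pow_eq_one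

lemma eta_pow_mod (a : ℕ) : eta d ^ a = eta d ^ (a % d) := by
  conv_lhs => rw [← Nat.div_add_mod a d]
  rw [pow_add, pow_mul, eta_pow_d, one_pow, one_mul]

lemma chi_add (x y : ZMod d) : chi d (x + y) = chi d x * chi d y := by
  rw [chi, chi, chi, ZMod.val_add, ← eta_pow_mod, pow_add]

lemma chi_zero : chi d 0 = 1 := by simp [chi]

lemma chi_mul (x y : ZMod d) : chi d (x * y) = (chi d x) ^ y.val := by
  rw [chi, chi, ZMod.val_mul, ← eta_pow_mod, ← pow_mul]

lemma abs_eta : ‖eta d‖ = 1 := by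
  have : eta d = Complex.exp ((2 * Real.pi / d : ℝ) * Complex.I) := by
    rw [eta]; push_cast; ring
  rw [this, Complex.norm_exp_ofReal_mul_I]

lemma abs_chi (x : ZMod d) : ‖chi d x‖ = 1 := by
  rw [chi, norm_pow, abs_eta, one_pow]

lemma chi_mul_chi_neg (x : ZMod d) : chi d x * chi d (-x) = 1 := by
  rw [← chi_add]; simp [chi_zero]

lemma conj_chi (x : ZMod d) : (starRingEnd ℂ) (chi d x) = chi d (-x) := by
  rw [← Complex.inv_eq_conj (abs_chi x)]
  exact inv_eq_of_mul_eq_one_right (chi_mul_chi_neg x)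

lemma char_sum (w : ZMod d) : ∑ a : ZMod d, chi d (a * w) = if w = 0 then (d:ℂ) else 0 := by
  have key : ∀ a : ZMod d, chi d (a * w) = (chi d w) ^ a.val := by
    intro a; rw [mul_comm, chi_mul]
  split_ifs with hw
  · subst hw; simp only [mul_zero, chi_zero, Finset.sum_const, nsmul_eq_mul, mul_one]
    rw [Finset.card_univ, ZMod.card]
  · have hsum : ∑ a : ZMod d, chi d (a * w) = ∑ i ∈ Finset.range d, (chi d w) ^ i := by
      rw [Finset.sum_congr rfl (fun a _ => key a)]
      obtain ⟨n, rfl⟩ := Nat.exists_eq_succ_of_ne_zero (NeZero.ne d)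
      exact Fin.sum_univ_eq_sum_range (fun i => chi (n+1) w ^ i) (n+1)
    rw [hsum]
    have hvpos : 0 < w.val := Nat.pos_of_ne_zero (fun h => hw ((ZMod.val_eq_zero w).mp h))
    have hne : chi d w ≠ 1 := by
      rw [chi]
      exact eta_prim.pow_ne_one_of_pos_of_lt hvpos.ne' (ZMod.val_lt w)
    rw [geom_sum_eq hne]
    have : chi d w ^ d = 1 := by
      rw [chi, ← pow_mul, mul_comm, pow_mul, eta_pow_d, one_pow]
    rw [this]; simp

end chi


section spin
variable {d : ℕ} [NeZero d]

lemma spinS_apply (j k m n : ZMod d) :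
    spinS d j k m n = if n = m + k then chi d (j * m) else 0 := by
  rw [spinS, Matrix.of_apply, chi, ZMod.val_mul]
  congr 1
  conv_lhs => rw [← Nat.div_add_mod (j.val * m.val) d]
  rw [pow_add, pow_mul]
  have : eta d ^ d = 1 := (Complex.isPrimitiveRoot_exp d (NeZero.ne d)).pow_eq_one
  rw [this, one_pow, one_mul]

lemma spinS_zero_zero : spinS d 0 0 = 1 := by
  ext m n
  rw [spinS_apply, Matrix.one_apply]
  simp [eq_comm, chi_zero]

lemma spin_mulVec (a b : ZMod d) (x : ZMod d → ℂ) (m : ZMod d) :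
    ((spinS d a b) *ᵥ x) m = chi d (a * m) * x (m + b) := by
  simp only [Matrix.mulVec, dotProduct, spinS_apply, ite_mul, zero_mul]
  rw [Finset.sum_ite_eq' Finset.univ (m + b)]
  simp

lemma sum_shift (b : ZMod d) (f : ZMod d → ℂ) : ∑ m : ZMod d, f (m + b) = ∑ m : ZMod d, f m :=
  Fintype.sum_equiv (Equiv.addRight b) _ f (fun _ => rfl)

lemma conj_chi_mul_chi (y : ZMod d) : (starRingEnd ℂ) (chi d y) * chi d y = 1 := by
  rw [conj_chi, mul_comm]; exact chi_mul_chi_neg y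

lemma exists_eigen (j k : ZMod d) : ∃ (x : ZMod d → ℂ) (lam : ℂ),
    (∑ m : ZMod d, (starRingEnd ℂ) (x m) * x m) = 1 ∧ (starRingEnd ℂ) lam * lam = 1 ∧
    ∀ m : ZMod d, chi d (j * m) * x (m + k) = lam * x m := by
  haveI : Nontrivial (ZMod d → ℂ) := by
    exact Pi.nontrivial
  obtain ⟨c, hc⟩ := Module.End.exists_eigenvalue (Matrix.mulVecLin (spinS d j k))
  obtain ⟨v, hv⟩ := hc.exists_hasEigenvector
  have heig : ∀ m : ZMod d, chi d (j * m) * v (m + k) = c * v m := by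
    intro m
    have := congrFun hv.apply_eq_smul m
    rw [Matrix.mulVecLin_apply] at this
    rw [← spin_mulVec, this, Pi.smul_apply, smul_eq_mul]
  set T : ℝ := ∑ m : ZMod d, Complex.normSq (v m) with hT
  have hTpos : 0 < T := by
    obtain ⟨m, hm⟩ := Function.ne_iff.mp hv.right
    exact Finset.sum_pos' (fun i _ => Complex.normSq_nonneg _)
      ⟨m, Finset.mem_univ m, Complex.normSq_pos.mpr (by simpa using hm)⟩
  set N : ℝ := Real.sqrt T with hN
  have hNpos : 0 < N := Real.sqrt_pos.mpr hTpos
  refine ⟨fun m => (N:ℂ)⁻¹ * v m, c, ?_, ?_, ?_⟩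
  · have : ∀ m : ZMod d, (starRingEnd ℂ) ((N:ℂ)⁻¹ * v m) * ((N:ℂ)⁻¹ * v m)
        = ((N:ℂ)⁻¹ * (N:ℂ)⁻¹) * ((starRingEnd ℂ) (v m) * v m) := by
      intro m; rw [_root_.map_mul, map_inv₀, Complex.conj_ofReal]; ring
    rw [Finset.sum_congr rfl (fun m _ => this m), ← Finset.mul_sum]
    have hsum : ∑ m : ZMod d, (starRingEnd ℂ) (v m) * v m = (T:ℂ) := by
      rw [hT]; push_cast
      exact Finset.sum_congr rfl (fun m _ => by rw [mul_comm, Complex.mul_conj])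
    rw [hsum]
    have hN2 : (N:ℝ) * N = T := Real.mul_self_sqrt hTpos.le
    have : ((N:ℂ)⁻¹ * (N:ℂ)⁻¹) * (T:ℂ) = ((N * N : ℝ):ℂ)⁻¹ * (T:ℂ) := by push_cast; ring
    rw [this, hN2]
    exact inv_mul_cancel₀ (by exact_mod_cast hTpos.ne')
  · -- |c| = 1
    have h1 : ∑ m : ZMod d, (starRingEnd ℂ) (c * v m) * (c * v m)
        = ((starRingEnd ℂ) c * c) * (T:ℂ) := by
      have : ∀ m : ZMod d, (starRingEnd ℂ) (c * v m) * (c * v m)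
          = ((starRingEnd ℂ) c * c) * ((starRingEnd ℂ) (v m) * v m) := by intro m; ring_nf; rw [_root_.map_mul]; ring
      rw [Finset.sum_congr rfl (fun m _ => this m), ← Finset.mul_sum]
      congr 1
      rw [hT]; push_cast
      exact Finset.sum_congr rfl (fun m _ => by rw [mul_comm, Complex.mul_conj])
    have h2 : ∑ m : ZMod d, (starRingEnd ℂ) (c * v m) * (c * v m) = (T:ℂ) := by
      have e1 : ∀ m : ZMod d, (starRingEnd ℂ) (c * v m) * (c * v m)
          = (starRingEnd ℂ) (chi d (j*m) * v (m + k)) * (chi d (j*m) * v (m + k)) := by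
        intro m; rw [heig m]
      have e2 : ∀ m : ZMod d, (starRingEnd ℂ) (chi d (j*m) * v (m + k)) * (chi d (j*m) * v (m + k))
          = (starRingEnd ℂ) (v (m+k)) * v (m+k) := by
        intro m
        rw [_root_.map_mul]
        calc (starRingEnd ℂ) (chi d (j*m)) * (starRingEnd ℂ) (v (m + k)) * (chi d (j*m) * v (m + k))
            = ((starRingEnd ℂ) (chi d (j*m)) * chi d (j*m)) * ((starRingEnd ℂ) (v (m + k)) * v (m+k)) := by ring
          _ = (starRingEnd ℂ) (v (m+k)) * v (m+k) := by rw [conj_chi_mul_chi]; ring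
      rw [Finset.sum_congr rfl (fun m _ => (e1 m).trans (e2 m))]
      rw [sum_shift k (fun m => (starRingEnd ℂ) (v m) * v m)]
      rw [hT]; push_cast
      exact Finset.sum_congr rfl (fun m _ => by rw [mul_comm, Complex.mul_conj])
    have hTne : (T:ℂ) ≠ 0 := by exact_mod_cast hTpos.ne'
    have := h1.symm.trans h2
    field_simp at this
    exact this
  · intro m
    calc chi d (j*m) * ((N:ℂ)⁻¹ * v (m+k)) = (N:ℂ)⁻¹ * (chi d (j*m) * v (m+k)) := by ring
      _ = (N:ℂ)⁻¹ * (c * v m) := by rw [heig m]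
      _ = c * ((N:ℂ)⁻¹ * v m) := by ring

end spin


section resolution
variable {d : ℕ} [NeZero d]

/-- The product state family: `Xv x a b = S_{a,b} x`. -/
noncomputable def Xv (d : ℕ) [NeZero d] (x : ZMod d → ℂ) (a b : ZMod d) : ZMod d → ℂ :=
  fun m => chi d (a * m) * x (m + b)

noncomputable def Pm (d : ℕ) [NeZero d] (x : ZMod d → ℂ) (a b : ZMod d) :
    Matrix (ZMod d) (ZMod d) ℂ :=
  vecMulVec (Xv d x a b) (star (Xv d x a b))

lemma Pm_apply (x : ZMod d → ℂ) (a b m n : ZMod d) :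
    Pm d x a b m n = (chi d (a * m) * x (m + b)) * ((starRingEnd ℂ) (chi d (a * n) * x (n + b))) := by
  rw [Pm, vecMulVec_apply, Xv, Pi.star_apply]
  rfl

lemma Pm_hermitian (x : ZMod d → ℂ) (a b : ZMod d) : (Pm d x a b).IsHermitian := by
  ext m n
  rw [conjTranspose_apply, Pm_apply, Pm_apply]
  simp only [star_mul', RCLike.star_def, Complex.conj_conj, _root_.map_mul]
  ring

lemma Pm_posSemidef (x : ZMod d → ℂ) (a b : ZMod d) : (Pm d x a b).PosSemidef := by
  refine Matrix.PosSemidef.of_dotProduct_mulVec_nonneg (Pm_hermitian x a b) (fun v => ?_)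
  set y := Xv d x a b
  set z : ℂ := ∑ j : ZMod d, (starRingEnd ℂ) (y j) * v j with hz
  have hMv : ∀ i, ((Pm d x a b) *ᵥ v) i = y i * z := by
    intro i
    rw [Matrix.mulVec, dotProduct, hz, Finset.mul_sum]
    refine Finset.sum_congr rfl (fun j _ => ?_)
    rw [Pm, vecMulVec_apply, Pi.star_apply]
    simp only [RCLike.star_def]
    ring
  have : dotProduct (star v) ((Pm d x a b) *ᵥ v) = (starRingEnd ℂ) z * z := by
    rw [dotProduct]
    have : ∀ i, (star v) i * ((Pm d x a b) *ᵥ v) i = ((starRingEnd ℂ) (v i) * y i) * z := by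
      intro i; rw [hMv i, Pi.star_apply]; simp only [RCLike.star_def]; ring
    rw [Finset.sum_congr rfl (fun i _ => this i), ← Finset.sum_mul]
    congr 1
    rw [hz, _root_.map_sum]
    refine Finset.sum_congr rfl (fun i _ => ?_)
    rw [_root_.map_mul, Complex.conj_conj]; ring
  rw [this, mul_comm, Complex.mul_conj]
  exact Complex.zero_le_real.mpr (Complex.normSq_nonneg z)

lemma Pm_trace (x : ZMod d → ℂ) (hx : (∑ m : ZMod d, (starRingEnd ℂ) (x m) * x m) = 1)
    (a b : ZMod d) : (Pm d x a b).trace = 1 := by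
  rw [Matrix.trace]
  have : ∀ m : ZMod d, (Pm d x a b).diag m = (starRingEnd ℂ) (x (m + b)) * x (m + b) := by
    intro m
    rw [Matrix.diag_apply, Pm_apply, _root_.map_mul]
    calc chi d (a*m) * x (m+b) * ((starRingEnd ℂ) (chi d (a*m)) * (starRingEnd ℂ) (x (m+b)))
        = ((starRingEnd ℂ) (chi d (a*m)) * chi d (a*m)) * ((starRingEnd ℂ) (x (m+b)) * x (m+b)) := by ring
      _ = (starRingEnd ℂ) (x (m+b)) * x (m+b) := by rw [conj_chi_mul_chi]; ring
  rw [Finset.sum_congr rfl (fun m _ => this m),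
    sum_shift b (fun m => (starRingEnd ℂ) (x m) * x m), hx]

lemma sum_Pm (x : ZMod d → ℂ) (hx : (∑ m : ZMod d, (starRingEnd ℂ) (x m) * x m) = 1) :
    ∑ a : ZMod d, ∑ b : ZMod d, Pm d x a b = (d:ℂ) • (1 : Matrix (ZMod d) (ZMod d) ℂ) := by
  ext m n
  rw [Matrix.sum_apply]
  simp only [Matrix.sum_apply]
  have hterm : ∀ a b : ZMod d, Pm d x a b m n
      = chi d (a * (m - n)) * (x (m + b) * (starRingEnd ℂ) (x (n + b))) := by
    intro a b
    rw [Pm_apply, _root_.map_mul, conj_chi]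
    have : chi d (a*m) * chi d (-(a*n)) = chi d (a * (m-n)) := by
      rw [← chi_add]; ring_nf
    calc chi d (a*m) * x (m+b) * (chi d (-(a*n)) * (starRingEnd ℂ) (x (n+b)))
        = (chi d (a*m) * chi d (-(a*n))) * (x (m+b) * (starRingEnd ℂ) (x (n+b))) := by ring
      _ = _ := by rw [this]
  calc ∑ a : ZMod d, ∑ b : ZMod d, Pm d x a b m n
      = (∑ a : ZMod d, chi d (a * (m - n))) * (∑ b : ZMod d, x (m + b) * (starRingEnd ℂ) (x (n + b))) := by
        rw [Finset.sum_mul_sum]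
        exact Finset.sum_congr rfl (fun a _ => Finset.sum_congr rfl (fun b _ => hterm a b))
    _ = ((d:ℂ) • (1 : Matrix (ZMod d) (ZMod d) ℂ)) m n := by
        rw [char_sum, Matrix.smul_apply, Matrix.one_apply, smul_eq_mul]
        by_cases h : m = n
        · subst h
          simp only [sub_self, if_pos rfl]
          have h5 : ∀ b : ZMod d, x (m + b) * (starRingEnd ℂ) (x (m + b))
              = (starRingEnd ℂ) (x (b+m)) * x (b+m) := fun b => by rw [add_comm m b]; ring
          rw [Finset.sum_congr rfl (fun b _ => h5 b),
            sum_shift m (fun t => (starRingEnd ℂ) (x t) * x t), hx]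
          simp
        · rw [if_neg (sub_ne_zero.mpr h), if_neg (fun hh => h hh), zero_mul, mul_zero]

lemma sum_phi_Pm (j k : ZMod d) (x : ZMod d → ℂ) (lam : ℂ)
    (hx : (∑ m : ZMod d, (starRingEnd ℂ) (x m) * x m) = 1)
    (hlam : (starRingEnd ℂ) lam * lam = 1)
    (heig : ∀ m : ZMod d, chi d (j * m) * x (m + k) = lam * x m) :
    ∑ a : ZMod d, ∑ b : ZMod d, (lam * chi d (a * k - j * b)) • Pm d x a b
      = (d:ℂ) • spinS d j k := by
  ext m n
  simp only [Matrix.sum_apply, Matrix.smul_apply, smul_eq_mul]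
  have hterm : ∀ a b : ZMod d, lam * chi d (a * k - j * b) * Pm d x a b m n
      = lam * (chi d (a * (k + m - n)) * (chi d (-(j*b)) * x (m + b) * (starRingEnd ℂ) (x (n + b)))) := by
    intro a b
    rw [Pm_apply, _root_.map_mul, conj_chi]
    have h1 : chi d (a*k - j*b) = chi d (a*k) * chi d (-(j*b)) := by rw [← chi_add]; ring_nf
    have h2 : chi d (a*k) * (chi d (a*m) * chi d (-(a*n))) = chi d (a * (k + m - n)) := by
      rw [← chi_add, ← chi_add]; ring_nf
    calc lam * chi d (a*k - j*b) * (chi d (a*m) * x (m+b) * (chi d (-(a*n)) * (starRingEnd ℂ) (x (n+b))))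
        = lam * ((chi d (a*k) * (chi d (a*m) * chi d (-(a*n)))) * (chi d (-(j*b)) * x (m+b) * (starRingEnd ℂ) (x (n+b)))) := by rw [h1]; ring
      _ = _ := by rw [h2]
  rw [Finset.sum_congr rfl (fun a (_ : a ∈ Finset.univ) => Finset.sum_congr rfl
    (fun b (_ : b ∈ Finset.univ) => hterm a b))]
  have hfact : ∑ a : ZMod d, ∑ b : ZMod d,
      lam * (chi d (a * (k + m - n)) * (chi d (-(j*b)) * x (m + b) * (starRingEnd ℂ) (x (n + b))))
      = lam * ((∑ a : ZMod d, chi d (a * (k + m - n)))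
          * (∑ b : ZMod d, chi d (-(j*b)) * x (m + b) * (starRingEnd ℂ) (x (n + b)))) := by
    calc ∑ a : ZMod d, ∑ b : ZMod d,
        lam * (chi d (a * (k + m - n)) * (chi d (-(j*b)) * x (m + b) * (starRingEnd ℂ) (x (n + b))))
        = ∑ a : ZMod d, ∑ b : ZMod d,
            (lam * chi d (a * (k + m - n))) * (chi d (-(j*b)) * x (m + b) * (starRingEnd ℂ) (x (n + b))) := by
          exact Finset.sum_congr rfl (fun a _ => Finset.sum_congr rfl (fun b _ => by ring))
      _ = ∑ a : ZMod d, (lam * chi d (a * (k + m - n)))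
            * (∑ b : ZMod d, chi d (-(j*b)) * x (m + b) * (starRingEnd ℂ) (x (n + b))) := by
          exact Finset.sum_congr rfl (fun a _ => (Finset.mul_sum _ _ _).symm)
      _ = (∑ a : ZMod d, lam * chi d (a * (k + m - n)))
            * (∑ b : ZMod d, chi d (-(j*b)) * x (m + b) * (starRingEnd ℂ) (x (n + b))) := by
          exact (Finset.sum_mul _ _ _).symm
      _ = lam * ((∑ a : ZMod d, chi d (a * (k + m - n)))
            * (∑ b : ZMod d, chi d (-(j*b)) * x (m + b) * (starRingEnd ℂ) (x (n + b)))) := by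
          rw [← Finset.mul_sum]; ring
  rw [hfact, char_sum, spinS_apply]
  by_cases h : n = m + k
  · subst h
    rw [if_pos (by ring)]
    have hb : ∀ b : ZMod d, chi d (-(j*b)) * x (m + b) * (starRingEnd ℂ) (x (m + k + b))
        = ((starRingEnd ℂ) lam * chi d (j * m)) * ((starRingEnd ℂ) (x (m+b)) * x (m + b)) := by
      intro b
      have he := heig (m + b)
      have hconj : (starRingEnd ℂ) (x (m + b + k)) =
          (starRingEnd ℂ) lam * chi d (j * (m+b)) * (starRingEnd ℂ) (x (m+b)) := by
        have := congrArg (starRingEnd ℂ) he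
        rw [_root_.map_mul, _root_.map_mul, conj_chi] at this
        have h3 : chi d (j*(m+b)) * (chi d (-(j*(m+b))) * (starRingEnd ℂ) (x (m+b+k)))
            = chi d (j*(m+b)) * ((starRingEnd ℂ) lam * (starRingEnd ℂ) (x (m+b))) := by rw [this]
        calc (starRingEnd ℂ) (x (m+b+k))
            = (chi d (j*(m+b)) * chi d (-(j*(m+b)))) * (starRingEnd ℂ) (x (m+b+k)) := by
              rw [chi_mul_chi_neg]; ring
          _ = chi d (j*(m+b)) * (chi d (-(j*(m+b))) * (starRingEnd ℂ) (x (m+b+k))) := by ring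
          _ = chi d (j*(m+b)) * ((starRingEnd ℂ) lam * (starRingEnd ℂ) (x (m+b))) := h3
          _ = _ := by ring
      have harg : m + k + b = m + b + k := by ring
      rw [harg, hconj]
      have h4 : chi d (-(j*b)) * chi d (j*(m+b)) = chi d (j*m) := by
        rw [← chi_add]; ring_nf
      calc chi d (-(j*b)) * x (m+b) * ((starRingEnd ℂ) lam * chi d (j*(m+b)) * (starRingEnd ℂ) (x (m+b)))
          = ((starRingEnd ℂ) lam) * (chi d (-(j*b)) * chi d (j*(m+b))) * ((starRingEnd ℂ) (x (m+b)) * x (m+b)) := by ring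
        _ = _ := by rw [h4]
    have hb' : ∀ b : ZMod d, ((starRingEnd ℂ) lam * chi d (j * m)) * ((starRingEnd ℂ) (x (m+b)) * x (m + b))
        = ((starRingEnd ℂ) lam * chi d (j * m)) * ((starRingEnd ℂ) (x (b+m)) * x (b + m)) := by
      intro b; rw [add_comm m b]
    rw [Finset.sum_congr rfl (fun b (_ : b ∈ Finset.univ) => (hb b).trans (hb' b)), ← Finset.mul_sum,
      sum_shift m (fun t => (starRingEnd ℂ) (x t) * x t), hx]
    rw [if_pos rfl]
    calc lam * ((d:ℂ) * ((starRingEnd ℂ) lam * chi d (j*m) * 1))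
        = ((starRingEnd ℂ) lam * lam) * ((d:ℂ) * chi d (j*m)) := by ring
      _ = (d:ℂ) * chi d (j*m) := by rw [hlam]; ring
  · have hne2 : ¬(k + m - n = 0) := fun hh => h ((sub_eq_zero.mp hh).symm.trans (add_comm k m))
    rw [if_neg hne2, if_neg h]
    ring
end resolution


section expansion
variable {d : ℕ} [NeZero d]

lemma trace_conjTranspose_mul {ι : Type*} [Fintype ι] [DecidableEq ι]
    (A B : Matrix ι ι ℂ) :
    (Aᴴ * B).trace = ∑ p : ι, ∑ q : ι, (starRingEnd ℂ) (A p q) * B p q := by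
  rw [Matrix.trace]
  simp only [Matrix.diag_apply, Matrix.mul_apply, conjTranspose_apply, RCLike.star_def]
  rw [Finset.sum_comm]

lemma key1 (p q m n : ZMod d) :
    ∑ γ : ZMod d × ZMod d, (starRingEnd ℂ) (spinS d γ.1 γ.2 p q) * spinS d γ.1 γ.2 m n
      = if p = m ∧ q = n then (d:ℂ) else 0 := by
  rw [Fintype.sum_prod_type]
  have hterm : ∀ u v : ZMod d, (starRingEnd ℂ) (spinS d u v p q) * spinS d u v m n
      = (if q = p + v then chi d (-(u*p)) else 0) * (if n = m + v then chi d (u*m) else 0) := by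
    intro u v
    rw [spinS_apply, spinS_apply, apply_ite (starRingEnd ℂ), conj_chi, map_zero]
  rw [Finset.sum_congr rfl (fun u _ => Finset.sum_congr rfl (fun v _ => hterm u v))]
  rw [Finset.sum_comm, Finset.sum_eq_single (q - p)]
  · have hv0 : q = p + (q - p) := by ring
    simp only [if_pos hv0]
    by_cases h2 : n = m + (q - p)
    · simp only [if_pos h2]
      have hchi : ∀ u : ZMod d, chi d (-(u*p)) * chi d (u*m) = chi d (u * (m - p)) := by
        intro u; rw [← chi_add]; ring_nf
      rw [Finset.sum_congr rfl (fun u _ => hchi u), char_sum]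
      by_cases h3 : p = m
      · subst h3
        have h4 : q = n := by rw [h2]; ring
        rw [if_pos (sub_self p), if_pos ⟨rfl, h4⟩]
      · rw [if_neg (fun hh => h3 (sub_eq_zero.mp hh).symm), if_neg (fun hh => h3 hh.1)]
    · simp only [if_neg h2, mul_zero, Finset.sum_const_zero]
      refine (if_neg (fun hh : p = m ∧ q = n => h2 ?_)).symm
      rw [hh.1, hh.2]; ring
  · intro v _ hv
    have : ¬(q = p + v) := fun hh => hv (by rw [hh]; ring)
    simp only [if_neg this, zero_mul, Finset.sum_const_zero]
  · intro h; exact absurd (Finset.mem_univ _) h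

lemma expansion (ρ : Matrix (ZMod d × ZMod d) (ZMod d × ZMod d) ℂ) :
    ∑ γ1 : ZMod d × ZMod d, ∑ γ2 : ZMod d × ZMod d,
      ((spinS d γ1.1 γ1.2 ⊗ₖ spinS d γ2.1 γ2.2)ᴴ * ρ).trace
        • (spinS d γ1.1 γ1.2 ⊗ₖ spinS d γ2.1 γ2.2)
      = ((d:ℂ)^2) • ρ := by
  ext m n
  simp only [Matrix.sum_apply, Matrix.smul_apply, smul_eq_mul]
  set f1 : (ZMod d × ZMod d) → (ZMod d × ZMod d) → (ZMod d × ZMod d) → ℂ :=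
    fun γ p q => (starRingEnd ℂ) (spinS d γ.1 γ.2 p.1 q.1) * spinS d γ.1 γ.2 m.1 n.1 with hf1
  set f2 : (ZMod d × ZMod d) → (ZMod d × ZMod d) → (ZMod d × ZMod d) → ℂ :=
    fun γ p q => (starRingEnd ℂ) (spinS d γ.1 γ.2 p.2 q.2) * spinS d γ.1 γ.2 m.2 n.2 with hf2
  have hK : ∀ (γ1 γ2 : ZMod d × ZMod d) (a b : (ZMod d × ZMod d)),
      (spinS d γ1.1 γ1.2 ⊗ₖ spinS d γ2.1 γ2.2) a b
        = spinS d γ1.1 γ1.2 a.1 b.1 * spinS d γ2.1 γ2.2 a.2 b.2 := by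
    intro γ1 γ2 a b
    rw [show a = (a.1, a.2) from rfl, show b = (b.1, b.2) from rfl, kronecker_apply]
  have hterm : ∀ γ1 γ2 : ZMod d × ZMod d,
      ((spinS d γ1.1 γ1.2 ⊗ₖ spinS d γ2.1 γ2.2)ᴴ * ρ).trace
          * (spinS d γ1.1 γ1.2 ⊗ₖ spinS d γ2.1 γ2.2) m n
        = ∑ p : ZMod d × ZMod d, ∑ q : ZMod d × ZMod d,
            f1 γ1 p q * (ρ p q * f2 γ2 p q) := by
    intro γ1 γ2
    rw [trace_conjTranspose_mul, hK, Finset.sum_mul]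
    refine Finset.sum_congr rfl (fun p _ => ?_)
    rw [Finset.sum_mul]
    refine Finset.sum_congr rfl (fun q _ => ?_)
    rw [hK, _root_.map_mul, hf1, hf2]
    ring
  rw [Finset.sum_congr rfl (fun γ1 (_ : γ1 ∈ Finset.univ) => Finset.sum_congr rfl
    (fun γ2 (_ : γ2 ∈ Finset.univ) => hterm γ1 γ2))]
  have swap1 : ∀ γ1 : ZMod d × ZMod d,
      (∑ γ2 : ZMod d × ZMod d, ∑ p : ZMod d × ZMod d, ∑ q : ZMod d × ZMod d,
        f1 γ1 p q * (ρ p q * f2 γ2 p q))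
      = ∑ p : ZMod d × ZMod d, ∑ q : ZMod d × ZMod d,
          f1 γ1 p q * (ρ p q * (∑ γ2 : ZMod d × ZMod d, f2 γ2 p q)) := by
    intro γ1
    rw [Finset.sum_comm]
    refine Finset.sum_congr rfl (fun p _ => ?_)
    rw [Finset.sum_comm]
    refine Finset.sum_congr rfl (fun q _ => ?_)
    simp only [Finset.mul_sum]
  rw [Finset.sum_congr rfl (fun γ1 (_ : γ1 ∈ Finset.univ) => swap1 γ1), Finset.sum_comm]
  have swap2 : ∀ p : ZMod d × ZMod d,
      (∑ γ1 : ZMod d × ZMod d, ∑ q : ZMod d × ZMod d,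
        f1 γ1 p q * (ρ p q * (∑ γ2 : ZMod d × ZMod d, f2 γ2 p q)))
      = ∑ q : ZMod d × ZMod d,
          (∑ γ1 : ZMod d × ZMod d, f1 γ1 p q) * (ρ p q * (∑ γ2 : ZMod d × ZMod d, f2 γ2 p q)) := by
    intro p
    rw [Finset.sum_comm]
    refine Finset.sum_congr rfl (fun q _ => ?_)
    rw [Finset.sum_mul]
  rw [Finset.sum_congr rfl (fun p (_ : p ∈ Finset.univ) => swap2 p)]
  have hkey : ∀ p q : ZMod d × ZMod d,
      (∑ γ1 : ZMod d × ZMod d, f1 γ1 p q) * (ρ p q * (∑ γ2 : ZMod d × ZMod d, f2 γ2 p q))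
      = (if p.1 = m.1 ∧ q.1 = n.1 then (d:ℂ) else 0)
          * (ρ p q * (if p.2 = m.2 ∧ q.2 = n.2 then (d:ℂ) else 0)) := by
    intro p q
    rw [hf1, hf2]
    rw [key1 p.1 q.1 m.1 n.1, key1 p.2 q.2 m.2 n.2]
  rw [Finset.sum_congr rfl (fun p (_ : p ∈ Finset.univ) => Finset.sum_congr rfl
    (fun q (_ : q ∈ Finset.univ) => hkey p q))]
  rw [Finset.sum_eq_single m]
  · rw [Finset.sum_eq_single n]
    · rw [if_pos ⟨rfl, rfl⟩, if_pos ⟨rfl, rfl⟩]; ring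
    · intro q _ hq
      by_cases hq1 : q.1 = n.1
      · have hq2 : ¬ q.2 = n.2 := fun h2 => hq (Prod.ext hq1 h2)
        rw [if_neg (fun hh : m.2 = m.2 ∧ q.2 = n.2 => hq2 hh.2), mul_zero, mul_zero]
      · rw [if_neg (fun hh : m.1 = m.1 ∧ q.1 = n.1 => hq1 hh.2), zero_mul]
    · intro h; exact absurd (Finset.mem_univ _) h
  · intro p _ hp
    have hcase : ¬(p.1 = m.1) ∨ ¬(p.2 = m.2) := by
      by_contra hcon
      push_neg at hcon
      exact hp (Prod.ext hcon.1 hcon.2)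
    rcases hcase with h | h
    · refine Finset.sum_eq_zero (fun q _ => ?_)
      rw [if_neg (fun hh : p.1 = m.1 ∧ q.1 = n.1 => h hh.1), zero_mul]
    · refine Finset.sum_eq_zero (fun q _ => ?_)
      rw [if_neg (fun hh : p.2 = m.2 ∧ q.2 = n.2 => h hh.1), mul_zero, mul_zero]
  · intro h; exact absurd (Finset.mem_univ _) h

section assembly
variable {d : ℕ} [NeZero d]

lemma kron_conjT (A B : Matrix (ZMod d) (ZMod d) ℂ) : (A ⊗ₖ B)ᴴ = Aᴴ ⊗ₖ Bᴴ := by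
  ext a b
  obtain ⟨a1, a2⟩ := a; obtain ⟨b1, b2⟩ := b
  rw [conjTranspose_apply, kronecker_apply, kronecker_apply, conjTranspose_apply,
    conjTranspose_apply, star_mul']

lemma sum_smul_kron {ι κ : Type} [Fintype ι] [Fintype κ]
    (c : ι → ℂ) (e : κ → ℂ) (A : ι → Matrix (ZMod d) (ZMod d) ℂ)
    (B : κ → Matrix (ZMod d) (ZMod d) ℂ) :
    ∑ i : ι, ∑ jj : κ, (c i * e jj) • (A i ⊗ₖ B jj)
      = (∑ i : ι, c i • A i) ⊗ₖ (∑ jj : κ, e jj • B jj) := by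
  ext a b
  obtain ⟨a1, a2⟩ := a; obtain ⟨b1, b2⟩ := b
  simp only [Matrix.sum_apply, Matrix.smul_apply, kronecker_apply, smul_eq_mul]
  rw [Finset.sum_mul_sum]
  exact Finset.sum_congr rfl (fun i _ => Finset.sum_congr rfl (fun jj _ => by ring))

lemma sum_Pm' (x : ZMod d → ℂ) (hx : (∑ m : ZMod d, (starRingEnd ℂ) (x m) * x m) = 1) :
    ∑ i : ZMod d × ZMod d, Pm d x i.1 i.2 = (d:ℂ) • (1 : Matrix (ZMod d) (ZMod d) ℂ) := by
  rw [Fintype.sum_prod_type]; exact sum_Pm x hx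

lemma sum_phi_Pm' (j k : ZMod d) (x : ZMod d → ℂ) (lam : ℂ)
    (hx : (∑ m : ZMod d, (starRingEnd ℂ) (x m) * x m) = 1)
    (hlam : (starRingEnd ℂ) lam * lam = 1)
    (heig : ∀ m : ZMod d, chi d (j * m) * x (m + k) = lam * x m) :
    ∑ i : ZMod d × ZMod d, (lam * chi d (i.1 * k - j * i.2)) • Pm d x i.1 i.2
      = (d:ℂ) • spinS d j k := by
  rw [Fintype.sum_prod_type]; exact sum_phi_Pm j k x lam hx hlam heig

lemma sum_conjphi_Pm' (j k : ZMod d) (x : ZMod d → ℂ) (lam : ℂ)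
    (hx : (∑ m : ZMod d, (starRingEnd ℂ) (x m) * x m) = 1)
    (hlam : (starRingEnd ℂ) lam * lam = 1)
    (heig : ∀ m : ZMod d, chi d (j * m) * x (m + k) = lam * x m) :
    ∑ i : ZMod d × ZMod d, ((starRingEnd ℂ) (lam * chi d (i.1 * k - j * i.2))) • Pm d x i.1 i.2
      = (d:ℂ) • (spinS d j k)ᴴ := by
  have h := congrArg conjTranspose (sum_phi_Pm' j k x lam hx hlam heig)
  rw [conjTranspose_sum, conjTranspose_smul, star_natCast] at h
  rw [← h]
  refine Finset.sum_congr rfl (fun i _ => ?_)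
  rw [conjTranspose_smul, Pm_hermitian x i.1 i.2]
  rfl

lemma sum_phase_zero (j k : ZMod d) (h : ¬(j = 0 ∧ k = 0)) :
    ∑ i : ZMod d × ZMod d, chi d (i.1 * k - j * i.2) = 0 := by
  rw [Fintype.sum_prod_type]
  have hterm : ∀ a b : ZMod d, chi d (a * k - j * b) = chi d (a * k) * chi d (b * (-j)) := by
    intro a b; rw [← chi_add]; ring_nf
  rw [Finset.sum_congr rfl (fun a (_ : a ∈ Finset.univ) => Finset.sum_congr rfl
    (fun b (_ : b ∈ Finset.univ) => hterm a b))]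
  rw [← Finset.sum_mul_sum, char_sum, char_sum]
  by_cases hk : k = 0
  · have hj : ¬ j = 0 := fun hj => h ⟨hj, hk⟩
    rw [if_neg (fun hh => hj (neg_eq_zero.mp hh)), mul_zero]
  · rw [if_neg hk, zero_mul]

lemma block_weight_sum (j1 k1 j2 k2 : ZMod d) (lam1 lam2 z : ℂ)
    (h : ¬(j1 = 0 ∧ k1 = 0 ∧ j2 = 0 ∧ k2 = 0)) :
    ∑ i : ZMod d × ZMod d, ∑ jj : ZMod d × ZMod d,
      (1 + (z * (lam1 * chi d (i.1 * k1 - j1 * i.2))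
        * (lam2 * chi d (jj.1 * k2 - j2 * jj.2))).re)
      = (d:ℝ)^4 := by
  rw [Finset.sum_congr rfl (fun i (_ : i ∈ Finset.univ) => Finset.sum_add_distrib),
    Finset.sum_add_distrib]
  have hcard : ∑ i : ZMod d × ZMod d, ∑ jj : ZMod d × ZMod d, (1:ℝ) = (d:ℝ)^4 := by
    simp only [Finset.sum_const, Finset.card_univ, Fintype.card_prod, ZMod.card, nsmul_eq_mul,
      mul_one]
    push_cast; ring
  have hre : ∑ i : ZMod d × ZMod d, ∑ jj : ZMod d × ZMod d,
      (z * (lam1 * chi d (i.1 * k1 - j1 * i.2)) * (lam2 * chi d (jj.1 * k2 - j2 * jj.2))).re = 0 := by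
    have h1 : ∀ i : ZMod d × ZMod d, ∑ jj : ZMod d × ZMod d,
        (z * (lam1 * chi d (i.1 * k1 - j1 * i.2)) * (lam2 * chi d (jj.1 * k2 - j2 * jj.2))).re
        = (∑ jj : ZMod d × ZMod d,
            z * (lam1 * chi d (i.1 * k1 - j1 * i.2)) * (lam2 * chi d (jj.1 * k2 - j2 * jj.2))).re := by
      intro i; rw [Complex.re_sum]
    rw [Finset.sum_congr rfl (fun i (_ : i ∈ Finset.univ) => h1 i), ← Complex.re_sum]
    have h2 : ∑ i : ZMod d × ZMod d, ∑ jj : ZMod d × ZMod d,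
        z * (lam1 * chi d (i.1 * k1 - j1 * i.2)) * (lam2 * chi d (jj.1 * k2 - j2 * jj.2))
        = (z * lam1 * lam2) * ((∑ i : ZMod d × ZMod d, chi d (i.1 * k1 - j1 * i.2))
            * (∑ jj : ZMod d × ZMod d, chi d (jj.1 * k2 - j2 * jj.2))) := by
      rw [Finset.sum_mul_sum, Finset.mul_sum]
      refine Finset.sum_congr rfl (fun i _ => ?_)
      rw [Finset.mul_sum]
      exact Finset.sum_congr rfl (fun jj _ => by ring)
    rw [h2]
    have : (∑ i : ZMod d × ZMod d, chi d (i.1 * k1 - j1 * i.2))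
        * (∑ jj : ZMod d × ZMod d, chi d (jj.1 * k2 - j2 * jj.2)) = 0 := by
      by_cases h12 : j1 = 0 ∧ k1 = 0
      · have h34 : ¬(j2 = 0 ∧ k2 = 0) := fun hh => h ⟨h12.1, h12.2, hh.1, hh.2⟩
        rw [sum_phase_zero j2 k2 h34, mul_zero]
      · rw [sum_phase_zero j1 k1 h12, zero_mul]
    rw [this, mul_zero, Complex.zero_re]
  rw [hcard, hre, add_zero]

lemma block_identity (j1 k1 j2 k2 : ZMod d) (x1 x2 : ZMod d → ℂ) (lam1 lam2 z : ℂ)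
    (hx1 : (∑ m : ZMod d, (starRingEnd ℂ) (x1 m) * x1 m) = 1)
    (hlam1 : (starRingEnd ℂ) lam1 * lam1 = 1)
    (heig1 : ∀ m : ZMod d, chi d (j1 * m) * x1 (m + k1) = lam1 * x1 m)
    (hx2 : (∑ m : ZMod d, (starRingEnd ℂ) (x2 m) * x2 m) = 1)
    (hlam2 : (starRingEnd ℂ) lam2 * lam2 = 1)
    (heig2 : ∀ m : ZMod d, chi d (j2 * m) * x2 (m + k2) = lam2 * x2 m) :
    ∑ i : ZMod d × ZMod d, ∑ jj : ZMod d × ZMod d,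
      (((1 + (z * (lam1 * chi d (i.1 * k1 - j1 * i.2))
          * (lam2 * chi d (jj.1 * k2 - j2 * jj.2))).re : ℝ)) : ℂ)
        • (Pm d x1 i.1 i.2 ⊗ₖ Pm d x2 jj.1 jj.2)
    = ((d:ℂ)^2) • (1 : Matrix (ZMod d × ZMod d) (ZMod d × ZMod d) ℂ)
      + (z * (d:ℂ)^2 / 2) • (spinS d j1 k1 ⊗ₖ spinS d j2 k2)
      + ((starRingEnd ℂ) z * (d:ℂ)^2 / 2) • (spinS d j1 k1 ⊗ₖ spinS d j2 k2)ᴴ := by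
  have hcoeff : ∀ (i jj : ZMod d × ZMod d),
      ((((1 + (z * (lam1 * chi d (i.1 * k1 - j1 * i.2))
          * (lam2 * chi d (jj.1 * k2 - j2 * jj.2))).re : ℝ)) : ℂ)
        • (Pm d x1 i.1 i.2 ⊗ₖ Pm d x2 jj.1 jj.2))
      = ((1:ℂ) * 1) • (Pm d x1 i.1 i.2 ⊗ₖ Pm d x2 jj.1 jj.2)
        + (((z/2) * (lam1 * chi d (i.1 * k1 - j1 * i.2)))
            * (lam2 * chi d (jj.1 * k2 - j2 * jj.2)))
          • (Pm d x1 i.1 i.2 ⊗ₖ Pm d x2 jj.1 jj.2)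
        + ((((starRingEnd ℂ) z / 2) * ((starRingEnd ℂ) (lam1 * chi d (i.1 * k1 - j1 * i.2))))
            * ((starRingEnd ℂ) (lam2 * chi d (jj.1 * k2 - j2 * jj.2))))
          • (Pm d x1 i.1 i.2 ⊗ₖ Pm d x2 jj.1 jj.2) := by
    intro i jj
    rw [← add_smul, ← add_smul]
    congr 1
    set w : ℂ := z * (lam1 * chi d (i.1 * k1 - j1 * i.2))
      * (lam2 * chi d (jj.1 * k2 - j2 * jj.2)) with hw
    have h3 := Complex.add_conj w
    calc ((1 + w.re : ℝ) : ℂ) = 1 + ((2 * w.re : ℝ) : ℂ) / 2 := by push_cast; ring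
      _ = 1 + (w + (starRingEnd ℂ) w) / 2 := by rw [← h3]
      _ = _ := by rw [hw, _root_.map_mul, _root_.map_mul]; ring
  rw [Finset.sum_congr rfl (fun i (_ : i ∈ Finset.univ) => Finset.sum_congr rfl
    (fun jj (_ : jj ∈ Finset.univ) => hcoeff i jj))]
  simp only [Finset.sum_add_distrib]
  rw [sum_smul_kron (fun _ => (1:ℂ)) (fun _ => (1:ℂ)),
    sum_smul_kron (fun i : ZMod d × ZMod d => (z/2) * (lam1 * chi d (i.1 * k1 - j1 * i.2)))
      (fun jj : ZMod d × ZMod d => lam2 * chi d (jj.1 * k2 - j2 * jj.2)),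
    sum_smul_kron (fun i : ZMod d × ZMod d =>
        ((starRingEnd ℂ) z / 2) * ((starRingEnd ℂ) (lam1 * chi d (i.1 * k1 - j1 * i.2))))
      (fun jj : ZMod d × ZMod d => (starRingEnd ℂ) (lam2 * chi d (jj.1 * k2 - j2 * jj.2)))]
  simp only [one_smul]
  rw [sum_Pm' x1 hx1, sum_Pm' x2 hx2]
  have p2a : ∑ i : ZMod d × ZMod d,
      ((z/2) * (lam1 * chi d (i.1 * k1 - j1 * i.2))) • Pm d x1 i.1 i.2
      = (z/2) • ((d:ℂ) • spinS d j1 k1) := by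
    have hsplit : ∀ i ∈ (Finset.univ : Finset (ZMod d × ZMod d)),
        ((z/2) * (lam1 * chi d (i.1 * k1 - j1 * i.2))) • Pm d x1 i.1 i.2
          = (z/2) • ((lam1 * chi d (i.1 * k1 - j1 * i.2)) • Pm d x1 i.1 i.2) :=
      fun i _ => mul_smul _ _ _
    rw [Finset.sum_congr rfl hsplit,
      ← Finset.smul_sum, sum_phi_Pm' j1 k1 x1 lam1 hx1 hlam1 heig1]
  have p2b := sum_phi_Pm' j2 k2 x2 lam2 hx2 hlam2 heig2
  have p3a : ∑ i : ZMod d × ZMod d,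
      (((starRingEnd ℂ) z / 2) * ((starRingEnd ℂ) (lam1 * chi d (i.1 * k1 - j1 * i.2))))
        • Pm d x1 i.1 i.2
      = ((starRingEnd ℂ) z / 2) • ((d:ℂ) • (spinS d j1 k1)ᴴ) := by
    have hsplit : ∀ i ∈ (Finset.univ : Finset (ZMod d × ZMod d)),
        (((starRingEnd ℂ) z / 2) * ((starRingEnd ℂ) (lam1 * chi d (i.1 * k1 - j1 * i.2))))
            • Pm d x1 i.1 i.2
          = ((starRingEnd ℂ) z / 2)
              • (((starRingEnd ℂ) (lam1 * chi d (i.1 * k1 - j1 * i.2))) • Pm d x1 i.1 i.2) :=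
      fun i _ => mul_smul _ _ _
    rw [Finset.sum_congr rfl hsplit,
      ← Finset.smul_sum, sum_conjphi_Pm' j1 k1 x1 lam1 hx1 hlam1 heig1]
  have p3b := sum_conjphi_Pm' j2 k2 x2 lam2 hx2 hlam2 heig2
  rw [p2a, p2b, p3a, p3b]
  have e1 : ((d:ℂ) • (1 : Matrix (ZMod d) (ZMod d) ℂ)) ⊗ₖ ((d:ℂ) • (1 : Matrix (ZMod d) (ZMod d) ℂ))
      = ((d:ℂ)^2) • (1 : Matrix (ZMod d × ZMod d) (ZMod d × ZMod d) ℂ) := by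
    rw [smul_kronecker, kronecker_smul, Matrix.one_kronecker_one, smul_smul,
      show (d:ℂ) * (d:ℂ) = (d:ℂ)^2 by ring]
  have e2 : ((z/2) • ((d:ℂ) • spinS d j1 k1)) ⊗ₖ ((d:ℂ) • spinS d j2 k2)
      = (z * (d:ℂ)^2 / 2) • (spinS d j1 k1 ⊗ₖ spinS d j2 k2) := by
    rw [smul_kronecker, smul_kronecker, kronecker_smul, smul_smul, smul_smul,
      show z/2 * (d:ℂ) * (d:ℂ) = z * (d:ℂ)^2/2 by ring]
  have e3 : (((starRingEnd ℂ) z/2) • ((d:ℂ) • (spinS d j1 k1)ᴴ)) ⊗ₖ ((d:ℂ) • (spinS d j2 k2)ᴴ)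
      = ((starRingEnd ℂ) z * (d:ℂ)^2 / 2) • (spinS d j1 k1 ⊗ₖ spinS d j2 k2)ᴴ := by
    rw [smul_kronecker, smul_kronecker, kronecker_smul, smul_smul, smul_smul,
      show (starRingEnd ℂ) z/2 * (d:ℂ) * (d:ℂ) = (starRingEnd ℂ) z * (d:ℂ)^2/2 by ring,
      kron_conjT]
  rw [e1, e2, e3]

lemma mix_posSemidef : ((d:ℂ)⁻¹ • (1 : Matrix (ZMod d) (ZMod d) ℂ)).PosSemidef := by
  have h1 : (d:ℂ)⁻¹ • (1 : Matrix (ZMod d) (ZMod d) ℂ)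
      = Matrix.diagonal (fun _ => (d:ℂ)⁻¹) := by
    ext a b
    by_cases hab : a = b
    · subst hab; simp [Matrix.diagonal_apply_eq, Matrix.one_apply_eq]
    · simp [Matrix.diagonal_apply_ne _ hab, Matrix.one_apply_ne hab]
  rw [h1]
  refine Matrix.PosSemidef.diagonal (fun i => ?_)
  show (0:ℂ) ≤ (d:ℂ)⁻¹
  have h2 : (0:ℝ) ≤ (d:ℝ)⁻¹ := inv_nonneg.mpr (Nat.cast_nonneg d)
  have heq : (d:ℂ)⁻¹ = (((d:ℝ)⁻¹ : ℝ) : ℂ) := by rw [Complex.ofReal_inv, Complex.ofReal_natCast]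
  rw [heq]
  exact Complex.zero_le_real.mpr h2

lemma mix_trace : ((d:ℂ)⁻¹ • (1 : Matrix (ZMod d) (ZMod d) ℂ)).trace = 1 := by
  rw [Matrix.trace_smul, Matrix.trace_one, ZMod.card, smul_eq_mul]
  exact inv_mul_cancel₀ (Nat.cast_ne_zero.mpr (NeZero.ne d))

lemma isSep_of_fintype {ι : Type} [Fintype ι]
    (ρ : Matrix (ZMod d × ZMod d) (ZMod d × ZMod d) ℂ)
    (w : ι → ℝ) (σ τ : ι → Matrix (ZMod d) (ZMod d) ℂ)
    (hw0 : ∀ i, 0 ≤ w i) (hw1 : ∑ i, w i = 1)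
    (hσ : ∀ i, (σ i).PosSemidef ∧ (σ i).trace = 1)
    (hτ : ∀ i, (τ i).PosSemidef ∧ (τ i).trace = 1)
    (hρ : ρ = ∑ i, (w i : ℂ) • (σ i ⊗ₖ τ i)) : IsSeparableState ρ := by
  set e := (Fintype.equivFin ι).symm with he
  refine ⟨Fintype.card ι, w ∘ e, σ ∘ e, τ ∘ e, fun i => hw0 _, ?_, fun i => hσ _,
    fun i => hτ _, ?_⟩
  · rw [← hw1]
    exact Fintype.sum_equiv e _ _ (fun i => rfl)
  · rw [hρ]
    exact (Fintype.sum_equiv e _ _ (fun i => rfl)).symm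

/-- If `ρ` is a bipartite density whose spin coefficients
`s_{(u1,u2),(v1,v2)} = Tr((S_{u1,v1} ⊗ S_{u2,v2})† ρ)` satisfy
`Σ |s_{(u1,u2),(v1,v2)}| ≤ 2`, then `ρ` is separable. -/
theorem separable_of_spin_coeff_sum_le_two (d : ℕ) [NeZero d] (hd : 2 ≤ d)
    (ρ : Matrix (ZMod d × ZMod d) (ZMod d × ZMod d) ℂ)
    (hρ : ρ.PosSemidef ∧ ρ.trace = 1)
    (hsum : ∑ u1 : ZMod d, ∑ v1 : ZMod d, ∑ u2 : ZMod d, ∑ v2 : ZMod d,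
        ‖((spinS d u1 v1 ⊗ₖ spinS d u2 v2)ᴴ * ρ).trace‖ ≤ 2) :
    IsSeparableState ρ := by
  classical
  obtain ⟨hPSD, htrρ⟩ := hρ
  have hd0 : (d:ℂ) ≠ 0 := Nat.cast_ne_zero.mpr (NeZero.ne d)
  have hdr0 : (d:ℝ) ≠ 0 := Nat.cast_ne_zero.mpr (NeZero.ne d)
  set s : (ZMod d × ZMod d) × (ZMod d × ZMod d) → ℂ :=
    fun γ => ((spinS d γ.1.1 γ.1.2 ⊗ₖ spinS d γ.2.1 γ.2.2)ᴴ * ρ).trace with hsdef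
  set K : (ZMod d × ZMod d) × (ZMod d × ZMod d) →
      Matrix (ZMod d × ZMod d) (ZMod d × ZMod d) ℂ :=
    fun γ => spinS d γ.1.1 γ.1.2 ⊗ₖ spinS d γ.2.1 γ.2.2 with hKdef
  have hK0 : K 0 = 1 := by
    show spinS d 0 0 ⊗ₖ spinS d 0 0 = 1
    rw [spinS_zero_zero, Matrix.one_kronecker_one]
  have hs0 : s 0 = 1 := by
    show ((spinS d 0 0 ⊗ₖ spinS d 0 0)ᴴ * ρ).trace = 1
    rw [spinS_zero_zero, Matrix.one_kronecker_one, conjTranspose_one, one_mul, htrρ]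
  have hsum2 : ∑ γ : (ZMod d × ZMod d) × (ZMod d × ZMod d), ‖s γ‖ ≤ 2 := by
    simp only [Fintype.sum_prod_type]
    exact hsum
  set c : ((ZMod d × ZMod d) × (ZMod d × ZMod d)) → ℝ :=
    fun γ => if γ = 0 then 0 else ‖s γ‖ with hcdef
  set t : ℝ := ∑ γ : (ZMod d × ZMod d) × (ZMod d × ZMod d), c γ with htdef
  have hc0 : ∀ γ, 0 ≤ c γ := by
    intro γ; rw [hcdef]; dsimp only
    split_ifs
    · exact le_refl 0
    · exact norm_nonneg _
  have ht0 : 0 ≤ t := Finset.sum_nonneg (fun γ _ => hc0 γ)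
  have ht1 : t ≤ 1 := by
    have e0 : ‖s 0‖
        = ∑ γ : (ZMod d × ZMod d) × (ZMod d × ZMod d),
            (if γ = 0 then ‖s γ‖ else 0) := by
      rw [Finset.sum_ite_eq' Finset.univ (0 : (ZMod d × ZMod d) × (ZMod d × ZMod d))
        (fun γ => ‖s γ‖)]
      simp
    have hsplit : t + ‖s 0‖
        = ∑ γ : (ZMod d × ZMod d) × (ZMod d × ZMod d), ‖s γ‖ := by
      rw [htdef, e0, ← Finset.sum_add_distrib]
      refine Finset.sum_congr rfl (fun γ _ => ?_)
      rw [hcdef]; dsimp only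
      by_cases h : γ = 0 <;> simp [h]
    have habs0 : ‖s 0‖ = 1 := by rw [hs0, norm_one]
    rw [habs0] at hsplit
    linarith [hsum2]
  choose xv lamv hxv hlamv heigv using fun (j k : ZMod d) => exists_eigen (d := d) j k
  set z : ((ZMod d × ZMod d) × (ZMod d × ZMod d)) → ℂ :=
    fun γ => if s γ = 0 then 1 else s γ / ((‖s γ‖ : ℝ) : ℂ) with hzdef
  have hzabs : ∀ γ, ‖z γ‖ = 1 := by
    intro γ; rw [hzdef]; dsimp only
    by_cases h : s γ = 0
    · simp [h]
    · rw [if_neg h, norm_div, Complex.norm_real, Real.norm_eq_abs, abs_of_nonneg (norm_nonneg _)]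
      exact div_self (norm_ne_zero_iff.mpr h)
  have hcz : ∀ γ, (c γ : ℂ) * z γ = (if γ = 0 then 0 else s γ) := by
    intro γ; rw [hcdef, hzdef]; dsimp only
    by_cases h : γ = 0
    · simp [h]
    · rw [if_neg h, if_neg h]
      by_cases h2 : s γ = 0
      · simp [h2]
      · rw [if_neg h2]
        have : ((‖s γ‖ : ℝ) : ℂ) ≠ 0 := by
          simpa using (norm_ne_zero_iff.mpr h2)
        field_simp
  have hlamabs : ∀ j k : ZMod d, ‖lamv j k‖ = 1 := by
    intro j k
    have h := hlamv j k
    have hns : Complex.normSq (lamv j k) = 1 := by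
      have h2 : ((Complex.normSq (lamv j k) : ℝ) : ℂ) = 1 := by
        rw [← Complex.mul_conj, mul_comm]; exact h
      exact_mod_cast h2
    rw [Complex.norm_def, hns, Real.sqrt_one]
  have habsw : ∀ (γ β : (ZMod d × ZMod d) × (ZMod d × ZMod d)),
      ‖z γ * (lamv γ.1.1 γ.1.2 * chi d (β.1.1 * γ.1.2 - γ.1.1 * β.1.2))
        * (lamv γ.2.1 γ.2.2 * chi d (β.2.1 * γ.2.2 - γ.2.1 * β.2.2))‖ = 1 := by
    intro γ β
    rw [norm_mul, norm_mul, norm_mul, norm_mul, hzabs, hlamabs, hlamabs, abs_chi, abs_chi]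
    norm_num
  have hre1 : ∀ (γ β : (ZMod d × ZMod d) × (ZMod d × ZMod d)),
      0 ≤ 1 + (z γ * (lamv γ.1.1 γ.1.2 * chi d (β.1.1 * γ.1.2 - γ.1.1 * β.1.2))
        * (lamv γ.2.1 γ.2.2 * chi d (β.2.1 * γ.2.2 - γ.2.1 * β.2.2))).re := by
    intro γ β
    have h2 := Complex.abs_re_le_norm (z γ * (lamv γ.1.1 γ.1.2
      * chi d (β.1.1 * γ.1.2 - γ.1.1 * β.1.2))
      * (lamv γ.2.1 γ.2.2 * chi d (β.2.1 * γ.2.2 - γ.2.1 * β.2.2)))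
    rw [habsw γ β] at h2
    have := (abs_le.mp h2).1
    linarith
  have hne : ∀ γ : (ZMod d × ZMod d) × (ZMod d × ZMod d), γ ≠ 0 →
      ¬(γ.1.1 = 0 ∧ γ.1.2 = 0 ∧ γ.2.1 = 0 ∧ γ.2.2 = 0) := by
    intro γ hγ hh
    exact hγ (Prod.ext (Prod.ext hh.1 hh.2.1) (Prod.ext hh.2.2.1 hh.2.2.2))
  set W : (((ZMod d × ZMod d) × (ZMod d × ZMod d))
      × ((ZMod d × ZMod d) × (ZMod d × ZMod d))) ⊕ Unit → ℝ :=
    Sum.elim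
      (fun p => c p.1 * ((1 + (z p.1
        * (lamv p.1.1.1 p.1.1.2 * chi d (p.2.1.1 * p.1.1.2 - p.1.1.1 * p.2.1.2))
        * (lamv p.1.2.1 p.1.2.2 * chi d (p.2.2.1 * p.1.2.2 - p.1.2.1 * p.2.2.2))).re)
          / (d:ℝ)^4))
      (fun _ => 1 - t) with hWdef
  set σf : (((ZMod d × ZMod d) × (ZMod d × ZMod d))
      × ((ZMod d × ZMod d) × (ZMod d × ZMod d))) ⊕ Unit → Matrix (ZMod d) (ZMod d) ℂ :=
    Sum.elim (fun p => Pm d (xv p.1.1.1 p.1.1.2) p.2.1.1 p.2.1.2)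
      (fun _ => (d:ℂ)⁻¹ • 1) with hσdef
  set τf : (((ZMod d × ZMod d) × (ZMod d × ZMod d))
      × ((ZMod d × ZMod d) × (ZMod d × ZMod d))) ⊕ Unit → Matrix (ZMod d) (ZMod d) ℂ :=
    Sum.elim (fun p => Pm d (xv p.1.2.1 p.1.2.2) p.2.2.1 p.2.2.2)
      (fun _ => (d:ℂ)⁻¹ • 1) with hτdef
  refine isSep_of_fintype ρ W σf τf ?_ ?_ ?_ ?_ ?_
  · -- nonneg
    rintro (⟨γ, β⟩ | u)
    · show 0 ≤ c γ * _
      refine mul_nonneg (hc0 γ) (div_nonneg (hre1 γ β) (by positivity))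
    · show 0 ≤ 1 - t
      linarith
  · -- sum of weights is 1
    rw [Fintype.sum_sum_type]
    have hunit : ∑ u : Unit, W (Sum.inr u) = 1 - t := by
      rw [Fintype.sum_unique]; rfl
    have hper : ∀ γ : (ZMod d × ZMod d) × (ZMod d × ZMod d),
        (∑ β : (ZMod d × ZMod d) × (ZMod d × ZMod d), W (Sum.inl (γ, β))) = c γ := by
      intro γ
      by_cases hγ : γ = 0
      · have hzero : ∀ β, W (Sum.inl (γ, β)) = 0 := by
          intro β
          show c γ * _ = 0
          rw [hcdef]; dsimp only; rw [if_pos hγ, zero_mul]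
        rw [Finset.sum_congr rfl (fun β _ => hzero β), Finset.sum_const_zero, hcdef]
        dsimp only; rw [if_pos hγ]
      · have hbws := block_weight_sum γ.1.1 γ.1.2 γ.2.1 γ.2.2
          (lamv γ.1.1 γ.1.2) (lamv γ.2.1 γ.2.2) (z γ) (hne γ hγ)
        have hsum4 : ∑ β : (ZMod d × ZMod d) × (ZMod d × ZMod d),
            (1 + (z γ * (lamv γ.1.1 γ.1.2 * chi d (β.1.1 * γ.1.2 - γ.1.1 * β.1.2))
              * (lamv γ.2.1 γ.2.2 * chi d (β.2.1 * γ.2.2 - γ.2.1 * β.2.2))).re)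
            = (d:ℝ)^4 := by
          rw [Fintype.sum_prod_type]; exact hbws
        calc (∑ β : (ZMod d × ZMod d) × (ZMod d × ZMod d), W (Sum.inl (γ, β)))
            = c γ * ∑ β : (ZMod d × ZMod d) × (ZMod d × ZMod d),
                ((1 + (z γ * (lamv γ.1.1 γ.1.2 * chi d (β.1.1 * γ.1.2 - γ.1.1 * β.1.2))
                  * (lamv γ.2.1 γ.2.2 * chi d (β.2.1 * γ.2.2 - γ.2.1 * β.2.2))).re)
                    / (d:ℝ)^4) := by
              rw [Finset.mul_sum]
              exact Finset.sum_congr rfl (fun β _ => rfl)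
          _ = c γ * ((∑ β : (ZMod d × ZMod d) × (ZMod d × ZMod d),
                (1 + (z γ * (lamv γ.1.1 γ.1.2 * chi d (β.1.1 * γ.1.2 - γ.1.1 * β.1.2))
                  * (lamv γ.2.1 γ.2.2 * chi d (β.2.1 * γ.2.2 - γ.2.1 * β.2.2))).re))
                    / (d:ℝ)^4) := by rw [← Finset.sum_div]
          _ = c γ * ((d:ℝ)^4 / (d:ℝ)^4) := by rw [hsum4]
          _ = c γ := by rw [div_self (pow_ne_zero 4 hdr0), mul_one]
    rw [Fintype.sum_prod_type, Finset.sum_congr rfl (fun γ _ => hper γ), hunit, ← htdef]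
    ring
  · -- σ PSD, trace 1
    rintro (⟨γ, β⟩ | u)
    · exact ⟨Pm_posSemidef _ _ _, Pm_trace _ (hxv _ _) _ _⟩
    · exact ⟨mix_posSemidef, mix_trace⟩
  · rintro (⟨γ, β⟩ | u)
    · exact ⟨Pm_posSemidef _ _ _, Pm_trace _ (hxv _ _) _ _⟩
    · exact ⟨mix_posSemidef, mix_trace⟩
  · -- the convex decomposition equals ρ
    rw [Fintype.sum_sum_type]
    have hexp : ∑ γ : (ZMod d × ZMod d) × (ZMod d × ZMod d), s γ • K γ = ((d:ℂ)^2) • ρ := by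
      rw [Fintype.sum_prod_type]; exact expansion ρ
    have hexpH : ∑ γ : (ZMod d × ZMod d) × (ZMod d × ZMod d),
        (starRingEnd ℂ) (s γ) • (K γ)ᴴ = ((d:ℂ)^2) • ρ := by
      have h := congrArg Matrix.conjTranspose hexp
      rw [conjTranspose_sum, conjTranspose_smul, star_pow, star_natCast, hPSD.1] at h
      rw [← h]
      exact Finset.sum_congr rfl (fun γ _ => by rw [conjTranspose_smul]; rfl)
    have hs'K : ∑ γ : (ZMod d × ZMod d) × (ZMod d × ZMod d),
        (if γ = 0 then 0 else s γ) • K γ = ((d:ℂ)^2) • ρ - 1 := by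
      have hsplit : ∀ γ : (ZMod d × ZMod d) × (ZMod d × ZMod d),
          s γ • K γ = (if γ = 0 then 0 else s γ) • K γ
            + (if γ = 0 then s γ • K γ else 0) := by
        intro γ; by_cases h : γ = 0 <;> simp [h]
      rw [Finset.sum_congr rfl (fun γ _ => hsplit γ), Finset.sum_add_distrib,
        Finset.sum_ite_eq' Finset.univ (0 : (ZMod d × ZMod d) × (ZMod d × ZMod d))
          (fun γ => s γ • K γ)] at hexp
      simp only [Finset.mem_univ, if_true] at hexp
      rw [hs0, hK0, one_smul] at hexp
      exact eq_sub_of_add_eq hexp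
    have hs'KH : ∑ γ : (ZMod d × ZMod d) × (ZMod d × ZMod d),
        (starRingEnd ℂ) (if γ = 0 then 0 else s γ) • (K γ)ᴴ = ((d:ℂ)^2) • ρ - 1 := by
      have hsplit : ∀ γ : (ZMod d × ZMod d) × (ZMod d × ZMod d),
          (starRingEnd ℂ) (s γ) • (K γ)ᴴ
            = (starRingEnd ℂ) (if γ = 0 then 0 else s γ) • (K γ)ᴴ
              + (if γ = 0 then (starRingEnd ℂ) (s γ) • (K γ)ᴴ else 0) := by
        intro γ; by_cases h : γ = 0 <;> simp [h]
      rw [Finset.sum_congr rfl (fun γ _ => hsplit γ), Finset.sum_add_distrib,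
        Finset.sum_ite_eq' Finset.univ (0 : (ZMod d × ZMod d) × (ZMod d × ZMod d))
          (fun γ => (starRingEnd ℂ) (s γ) • (K γ)ᴴ)] at hexpH
      simp only [Finset.mem_univ, if_true] at hexpH
      rw [hs0, hK0, conjTranspose_one, _root_.map_one, one_smul] at hexpH
      exact eq_sub_of_add_eq hexpH
    have hblock : ∀ γ : (ZMod d × ZMod d) × (ZMod d × ZMod d),
        (∑ β : (ZMod d × ZMod d) × (ZMod d × ZMod d),
          ((W (Sum.inl (γ, β)) : ℝ) : ℂ) • (σf (Sum.inl (γ, β)) ⊗ₖ τf (Sum.inl (γ, β))))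
        = ((c γ : ℂ) * ((d:ℂ)^4)⁻¹) • (((d:ℂ)^2) • (1 : Matrix (ZMod d × ZMod d) (ZMod d × ZMod d) ℂ)
            + (z γ * (d:ℂ)^2/2) • K γ
            + ((starRingEnd ℂ) (z γ) * (d:ℂ)^2/2) • (K γ)ᴴ) := by
      intro γ
      have hb := block_identity γ.1.1 γ.1.2 γ.2.1 γ.2.2 (xv γ.1.1 γ.1.2) (xv γ.2.1 γ.2.2)
        (lamv γ.1.1 γ.1.2) (lamv γ.2.1 γ.2.2) (z γ)
        (hxv _ _) (hlamv _ _) (heigv _ _) (hxv _ _) (hlamv _ _) (heigv _ _)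
      have hterm : ∀ β : (ZMod d × ZMod d) × (ZMod d × ZMod d),
          ((W (Sum.inl (γ, β)) : ℝ) : ℂ) • (σf (Sum.inl (γ, β)) ⊗ₖ τf (Sum.inl (γ, β)))
          = ((c γ : ℂ) * ((d:ℂ)^4)⁻¹)
              • ((((1 + (z γ * (lamv γ.1.1 γ.1.2 * chi d (β.1.1 * γ.1.2 - γ.1.1 * β.1.2))
                  * (lamv γ.2.1 γ.2.2 * chi d (β.2.1 * γ.2.2 - γ.2.1 * β.2.2))).re : ℝ)) : ℂ)
                • (Pm d (xv γ.1.1 γ.1.2) β.1.1 β.1.2 ⊗ₖ Pm d (xv γ.2.1 γ.2.2) β.2.1 β.2.2)) := by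
        intro β
        rw [smul_smul]
        congr 1
        have hW : W (Sum.inl (γ, β)) = c γ * ((1 + (z γ
            * (lamv γ.1.1 γ.1.2 * chi d (β.1.1 * γ.1.2 - γ.1.1 * β.1.2))
            * (lamv γ.2.1 γ.2.2 * chi d (β.2.1 * γ.2.2 - γ.2.1 * β.2.2))).re) / (d:ℝ)^4) := rfl
        rw [hW]
        push_cast
        ring
      rw [Finset.sum_congr rfl (fun β _ => hterm β), ← Finset.smul_sum]
      congr 1
      rw [Fintype.sum_prod_type]
      exact hb
    have hinl2 : (∑ p : ((ZMod d × ZMod d) × (ZMod d × ZMod d))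
          × ((ZMod d × ZMod d) × (ZMod d × ZMod d)),
        ((W (Sum.inl p) : ℝ) : ℂ) • (σf (Sum.inl p) ⊗ₖ τf (Sum.inl p)))
        = (↑t * ((d:ℂ)^2)⁻¹) • (1 : Matrix (ZMod d × ZMod d) (ZMod d × ZMod d) ℂ)
          + (((d:ℂ)^2)⁻¹/2) • (((d:ℂ)^2) • ρ - 1)
          + (((d:ℂ)^2)⁻¹/2) • (((d:ℂ)^2) • ρ - 1) := by
      rw [Fintype.sum_prod_type, Finset.sum_congr rfl (fun γ _ => hblock γ)]
      have hsplitB : ∀ γ : (ZMod d × ZMod d) × (ZMod d × ZMod d),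
          ((c γ : ℂ) * ((d:ℂ)^4)⁻¹) • (((d:ℂ)^2) • (1 : Matrix (ZMod d × ZMod d) (ZMod d × ZMod d) ℂ)
            + (z γ * (d:ℂ)^2/2) • K γ
            + ((starRingEnd ℂ) (z γ) * (d:ℂ)^2/2) • (K γ)ᴴ)
          = ((c γ : ℂ) * ((d:ℂ)^2)⁻¹) • (1 : Matrix (ZMod d × ZMod d) (ZMod d × ZMod d) ℂ)
            + (((d:ℂ)^2)⁻¹/2) • ((if γ = 0 then 0 else s γ) • K γ)
            + (((d:ℂ)^2)⁻¹/2) • ((starRingEnd ℂ) (if γ = 0 then 0 else s γ) • (K γ)ᴴ) := by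
        intro γ
        have hczc := congrArg (starRingEnd ℂ) (hcz γ)
        rw [_root_.map_mul, Complex.conj_ofReal] at hczc
        have k1 : ((c γ:ℂ) * ((d:ℂ)^4)⁻¹) * (d:ℂ)^2 = (c γ:ℂ) * ((d:ℂ)^2)⁻¹ := by
          field_simp
        have k2 : (((c γ:ℂ) * ((d:ℂ)^4)⁻¹) * (z γ * (d:ℂ)^2/2)) • K γ
            = (((d:ℂ)^2)⁻¹/2) • ((if γ = 0 then 0 else s γ) • K γ) := by
          rw [smul_smul]
          congr 1
          rw [← hcz γ]
          field_simp
        have k3 : (((c γ:ℂ) * ((d:ℂ)^4)⁻¹) * ((starRingEnd ℂ) (z γ) * (d:ℂ)^2/2)) • (K γ)ᴴ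
            = (((d:ℂ)^2)⁻¹/2) • ((starRingEnd ℂ) (if γ = 0 then 0 else s γ) • (K γ)ᴴ) := by
          rw [smul_smul]
          congr 1
          rw [← hczc]
          field_simp
        rw [smul_add, smul_add, smul_smul, smul_smul, smul_smul, k1, k2, k3]
      rw [Finset.sum_congr rfl (fun γ _ => hsplitB γ)]
      have hA : ∑ γ : (ZMod d × ZMod d) × (ZMod d × ZMod d),
          ((c γ:ℂ) * ((d:ℂ)^2)⁻¹) • (1 : Matrix (ZMod d × ZMod d) (ZMod d × ZMod d) ℂ)
          = (↑t * ((d:ℂ)^2)⁻¹) • (1 : Matrix (ZMod d × ZMod d) (ZMod d × ZMod d) ℂ) := by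
        rw [← Finset.sum_smul, ← Finset.sum_mul, ← Complex.ofReal_sum, ← htdef]
      have hB : ∑ γ : (ZMod d × ZMod d) × (ZMod d × ZMod d),
          (((d:ℂ)^2)⁻¹/2) • ((if γ = 0 then 0 else s γ) • K γ)
          = (((d:ℂ)^2)⁻¹/2) • (((d:ℂ)^2) • ρ - 1) := by
        rw [← Finset.smul_sum, hs'K]
      have hC : ∑ γ : (ZMod d × ZMod d) × (ZMod d × ZMod d),
          (((d:ℂ)^2)⁻¹/2) • ((starRingEnd ℂ) (if γ = 0 then 0 else s γ) • (K γ)ᴴ)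
          = (((d:ℂ)^2)⁻¹/2) • (((d:ℂ)^2) • ρ - 1) := by
        rw [← Finset.smul_sum, hs'KH]
      simp only [Finset.sum_add_distrib]
      rw [hA, hB, hC]
    have hinr2 : (∑ u : Unit, ((W (Sum.inr u) : ℝ) : ℂ) • (σf (Sum.inr u) ⊗ₖ τf (Sum.inr u)))
        = (((1 - t : ℝ)) : ℂ) • (((d:ℂ)⁻¹ * (d:ℂ)⁻¹)
            • (1 : Matrix (ZMod d × ZMod d) (ZMod d × ZMod d) ℂ)) := by
      rw [Fintype.sum_unique]
      show (((1 - t : ℝ)) : ℂ) • (((d:ℂ)⁻¹ • 1) ⊗ₖ ((d:ℂ)⁻¹ • 1)) = _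
      rw [smul_kronecker, kronecker_smul, Matrix.one_kronecker_one, smul_smul,
        smul_smul, smul_smul]
      congr 1
      ring
    rw [hinl2, hinr2]
    have e1 : (((d:ℂ)^2)⁻¹/2) • (((d:ℂ)^2) • ρ - (1 : Matrix (ZMod d × ZMod d) (ZMod d × ZMod d) ℂ))
        = (2⁻¹ : ℂ) • ρ - (((d:ℂ)^2)⁻¹/2) • (1 : Matrix (ZMod d × ZMod d) (ZMod d × ZMod d) ℂ) := by
      rw [smul_sub, smul_smul]
      congr 2
      field_simp
    rw [e1]
    have e2 : ((1 - t : ℝ) : ℂ) = 1 - (t : ℂ) := by push_cast; ring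
    have e3 : (d:ℂ)⁻¹ * (d:ℂ)⁻¹ = ((d:ℂ)^2)⁻¹ := by
      field_simp
    rw [e2, e3]
    module

end assembly
end expansion
end

section
/- Let d be an odd prime, c < 0 a real number, and ρ a bipartite density supported in M such that for every k ≠ 0 and all n1, n2 ∈ Z_d, ρ_{n1 n2, (n1+k)(n2+k)} = c·δ(n1,n2). If every diagonal entry of ρ is at least |c|(d−1), then ρ is separable. -/
open Matrix Kronecker
open scoped ComplexOrder

namespace SepAux

variable {d : ℕ} [NeZero d]

/-- rank-one outer product matrix `v vᴴ`. -/
noncomputable def outer (v : ZMod d → ℂ) : Matrix (ZMod d) (ZMod d) ℂ :=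
  vecMulVec v (star v)

lemma outer_apply (v : ZMod d → ℂ) (i j : ZMod d) :
    outer v i j = v i * (starRingEnd ℂ) (v j) := rfl

lemma outer_posSemidef (v : ZMod d → ℂ) : (outer v).PosSemidef := by
  have h : outer v = Matrix.replicateCol Unit v * (Matrix.replicateCol Unit v)ᴴ := by
    rw [conjTranspose_replicateCol, outer, vecMulVec_eq Unit]
  rw [h]
  exact posSemidef_self_mul_conjTranspose _

lemma outer_trace (v : ZMod d → ℂ) :
    (outer v).trace = ∑ x, v x * (starRingEnd ℂ) (v x) := by
  simp [Matrix.trace, Matrix.diag, outer_apply]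

/-- the pure state `|n⟩⟨n|`. -/
noncomputable def eket (n : ZMod d) : Matrix (ZMod d) (ZMod d) ℂ :=
  Matrix.diagonal (fun x => if x = n then 1 else 0)

lemma eket_posSemidef (n : ZMod d) : (eket n).PosSemidef := by
  refine Matrix.PosSemidef.diagonal fun x => ?_
  dsimp only
  split <;> norm_num

lemma eket_trace (n : ZMod d) : (eket n).trace = 1 := by
  simp [eket, Matrix.trace, Matrix.diag, Matrix.diagonal_apply]

lemma eket_apply (n : ZMod d) (i j : ZMod d) :
    eket n i j = if i = j ∧ i = n then 1 else 0 := by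
  simp only [eket, Matrix.diagonal_apply]
  split <;> split <;> simp_all

lemma smul_posSemidef {M : Matrix (ZMod d) (ZMod d) ℂ} (hM : M.PosSemidef)
    {r : ℂ} (hr : 0 ≤ r) : (r • M).PosSemidef := by
  rw [posSemidef_iff_dotProduct_mulVec]
  constructor
  · have hr' : star r = r := by
      rw [Complex.star_def, Complex.conj_eq_iff_im]
      exact (Complex.nonneg_iff.mp hr).2.symm
    rw [Matrix.IsHermitian, Matrix.conjTranspose_smul, hr', hM.1.eq]
  · intro x
    rw [Matrix.smul_mulVec, dotProduct_smul, smul_eq_mul]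
    exact mul_nonneg hr (hM.dotProduct_mulVec_nonneg x)

/-- vector `e_n + b e_m` (unnormalized). -/
noncomputable def pket (n m : ZMod d) (b : ℂ) : ZMod d → ℂ :=
  fun x => if x = n then 1 else if x = m then b else 0

/-- normalized pure state of `(e_n + b e_m)/√2`. -/
noncomputable def pmat (n m : ZMod d) (b : ℂ) : Matrix (ZMod d) (ZMod d) ℂ :=
  ((2 : ℂ))⁻¹ • outer (pket n m b)

lemma pmat_posSemidef (n m : ZMod d) (b : ℂ) : (pmat n m b).PosSemidef := by
  refine smul_posSemidef (outer_posSemidef _) ?_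
  rw [Complex.nonneg_iff]
  norm_num

lemma pmat_trace (n m : ZMod d) (hnm : n ≠ m) {b : ℂ}
    (hb : b * (starRingEnd ℂ) b = 1) : (pmat n m b).trace = 1 := by
  rw [pmat, Matrix.trace_smul, outer_trace]
  have h : ∀ x, pket n m b x * (starRingEnd ℂ) (pket n m b x)
      = (if x = n then 1 else 0) + (if x = m then 1 else 0) := by
    intro x
    by_cases h1 : x = n
    · subst h1
      simp [pket, hnm]
    · by_cases h2 : x = m
      · subst h2
        simp [pket, h1, hb]
      · simp [pket, h1, h2]
  rw [Finset.sum_congr rfl (fun x _ => h x), Finset.sum_add_distrib,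
    Finset.sum_ite_eq' Finset.univ n (fun _ => (1:ℂ)),
    Finset.sum_ite_eq' Finset.univ m (fun _ => (1:ℂ))]
  norm_num

lemma pmat_apply (n m : ZMod d) (b : ℂ) (i j : ZMod d) :
    pmat n m b i j = (2:ℂ)⁻¹ * (pket n m b i * (starRingEnd ℂ) (pket n m b j)) := by
  simp [pmat, outer_apply]

noncomputable def phase : Fin 4 → ℂ := ![1, Complex.I, -1, -Complex.I]

lemma phase_mul_conj (a : Fin 4) : phase a * (starRingEnd ℂ) (phase a) = 1 := by
  fin_cases a <;> simp [phase, Complex.mul_conj'] <;>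
    norm_num [Complex.ext_iff]

/-- value table of the four-phase average. -/
noncomputable def tval (n m p1 p2 q1 q2 : ZMod d) : ℂ :=
  if ((p1 = n ∧ q1 = n) ∨ (p1 = m ∧ q1 = m)) ∧ ((p2 = n ∧ q2 = n) ∨ (p2 = m ∧ q2 = m))
    then 1
  else if (p1 = n ∧ p2 = n ∧ q1 = m ∧ q2 = m) ∨ (p1 = m ∧ p2 = m ∧ q1 = n ∧ q2 = n)
    then -1 else 0

lemma pair_sum (n m : ZMod d) (hnm : n ≠ m) (p1 p2 q1 q2 : ZMod d) :
    (∑ a : Fin 4,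
        (pmat n m (phase a) ⊗ₖ pmat n m (-(starRingEnd ℂ) (phase a))) (p1, p2) (q1, q2))
      = tval n m p1 p2 q1 q2 := by
  rw [tval]
  have hmn : ¬ m = n := fun h => hnm h.symm
  by_cases h1 : p1 = n ∨ p1 = m
  · by_cases h2 : p2 = n ∨ p2 = m
    · by_cases h3 : q1 = n ∨ q1 = m
      · by_cases h4 : q2 = n ∨ q2 = m
        · rcases h1 with rfl | rfl <;> rcases h2 with rfl | rfl <;>
            rcases h3 with rfl | rfl <;> rcases h4 with rfl | rfl <;>
            simp [kroneckerMap_apply, pmat_apply, pket, hnm, hmn, Fin.sum_univ_four, phase,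
              Complex.conj_I] <;>
            ring_nf <;> norm_num [Complex.ext_iff]
        · push_neg at h4
          simp [kroneckerMap_apply, pmat_apply, pket, h4.1, h4.2, hnm, hmn]
      · push_neg at h3
        simp [kroneckerMap_apply, pmat_apply, pket, h3.1, h3.2, hnm, hmn]
    · push_neg at h2
      simp [kroneckerMap_apply, pmat_apply, pket, h2.1, h2.2, hnm, hmn]
  · push_neg at h1
    simp [kroneckerMap_apply, pmat_apply, pket, h1.1, h1.2, hnm, hmn]


lemma sum_if_mixed (t : ZMod d) (z w : ℂ) :
    (∑ n : ZMod d, if n = t then z else w) = z + ((d:ℂ)-1) * w := by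
  have h : ∀ n : ZMod d, (if n = t then z else w) = (if n = t then z - w else 0) + w := by
    intro n; split <;> ring
  rw [Finset.sum_congr rfl fun n _ => h n, Finset.sum_add_distrib,
    Finset.sum_ite_eq' Finset.univ t (fun _ => z - w), Finset.sum_const, Finset.card_univ,
    ZMod.card, nsmul_eq_mul]
  simp; ring

lemma sum_if_eq (t : ZMod d) (z : ℂ) : (∑ n : ZMod d, if n = t then z else 0) = z := by
  rw [sum_if_mixed]; ring

lemma sum_if_ne (t : ZMod d) (z : ℂ) :
    (∑ n : ZMod d, if n = t then 0 else z) = ((d:ℂ)-1) * z := by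
  rw [sum_if_mixed]; ring

lemma tval_total (p1 p2 q1 q2 : ZMod d) :
    (∑ x : ZMod d × ZMod d, if x.1 = x.2 then (0:ℂ) else tval x.1 x.2 p1 p2 q1 q2)
      = if p1 = q1 ∧ p2 = q2 then (if p1 = p2 then 2*((d:ℂ)-1) else 2)
        else if p1 = p2 ∧ q1 = q2 then -2 else 0 := by
  rw [Fintype.sum_prod_type]
  by_cases hA : p1 = q1 ∧ p2 = q2
  · obtain ⟨h1, h2⟩ := hA
    subst h1; subst h2
    rw [if_pos ⟨rfl, rfl⟩]
    by_cases hB : p1 = p2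
    · subst hB
      rw [if_pos rfl]
      have hrow : ∀ n : ZMod d,
          (∑ m : ZMod d, if n = m then (0:ℂ) else tval n m p1 p1 p1 p1)
            = if n = p1 then (d:ℂ)-1 else 1 := by
        intro n
        by_cases hn : p1 = n
        · subst hn
          have h : ∀ m : ZMod d, (if p1 = m then (0:ℂ) else tval p1 m p1 p1 p1 p1)
              = if m = p1 then 0 else 1 := by
            intro m
            by_cases h1 : p1 = m
            · subst h1; simp
            · have h1' : ¬ m = p1 := fun hh => h1 hh.symm
              rw [if_neg h1, if_neg h1']
              simp [tval]
          rw [Finset.sum_congr rfl fun m _ => h m, sum_if_ne, if_pos rfl]; ring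
        · have hn' : ¬ n = p1 := fun hh => hn hh.symm
          have h : ∀ m : ZMod d, (if n = m then (0:ℂ) else tval n m p1 p1 p1 p1)
              = if m = p1 then 1 else 0 := by
            intro m
            by_cases h1 : n = m
            · subst h1; rw [if_pos rfl, if_neg hn']
            · by_cases h2 : p1 = m
              · subst h2; rw [if_neg h1, if_pos rfl]; simp [tval]
              · have h2' : ¬ m = p1 := fun hh => h2 hh.symm
                rw [if_neg h1, if_neg h2']
                simp [tval, hn, h2]
          rw [Finset.sum_congr rfl fun m _ => h m, sum_if_eq, if_neg hn']
      rw [Finset.sum_congr rfl fun n _ => hrow n, sum_if_mixed]; ring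
    · rw [if_neg hB]
      have hB' : ¬ p2 = p1 := fun hh => hB hh.symm
      have hrow : ∀ n : ZMod d,
          (∑ m : ZMod d, if n = m then (0:ℂ) else tval n m p1 p2 p1 p2)
            = (if n = p1 then 1 else 0) + (if n = p2 then 1 else 0) := by
        intro n
        by_cases hn1 : p1 = n
        · subst hn1
          have h : ∀ m : ZMod d, (if p1 = m then (0:ℂ) else tval p1 m p1 p2 p1 p2)
              = if m = p2 then 1 else 0 := by
            intro m
            by_cases h1 : p1 = m
            · rw [if_pos h1, if_neg (fun hh => hB (h1.trans hh))]
            · rw [if_neg h1]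
              by_cases h2 : p2 = m
              · subst h2; rw [if_pos rfl]; simp [tval]
              · have h2' : ¬ m = p2 := fun hh => h2 hh.symm
                rw [if_neg h2']
                simp [tval, h1, h2, hB']
          rw [Finset.sum_congr rfl fun m _ => h m, sum_if_eq, if_pos rfl, if_neg hB]; ring
        · have hn1' : ¬ n = p1 := fun hh => hn1 hh.symm
          by_cases hn2 : p2 = n
          · subst hn2
            have h : ∀ m : ZMod d, (if p2 = m then (0:ℂ) else tval p2 m p1 p2 p1 p2)
                = if m = p1 then 1 else 0 := by
              intro m
              by_cases h1 : p2 = m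
              · rw [if_pos h1, if_neg (fun hh => hB (h1.trans hh).symm)]
              · rw [if_neg h1]
                by_cases h2 : p1 = m
                · subst h2; rw [if_pos rfl]; simp [tval]
                · have h2' : ¬ m = p1 := fun hh => h2 hh.symm
                  rw [if_neg h2']
                  simp [tval, hB, h2]
            rw [Finset.sum_congr rfl fun m _ => h m, sum_if_eq, if_neg hB', if_pos rfl]; ring
          · have hn2' : ¬ n = p2 := fun hh => hn2 hh.symm
            have h : ∀ m : ZMod d, (if n = m then (0:ℂ) else tval n m p1 p2 p1 p2) = 0 := by
              intro m
              by_cases h1 : n = m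
              · simp [h1]
              · rw [if_neg h1, tval, if_neg, if_neg]
                · rintro (⟨ha, hb, _, _⟩ | ⟨ha, hb, _, _⟩)
                  · exact hn1 ha
                  · exact hB (ha.trans hb.symm)
                · rintro ⟨(⟨ha, -⟩ | ⟨ha, -⟩), (⟨hb, -⟩ | ⟨hb, -⟩)⟩
                  · exact hn1 ha
                  · exact hn1 ha
                  · exact hn2 hb
                  · exact hB (ha.trans hb.symm)
            rw [Finset.sum_congr rfl fun m _ => h m, Finset.sum_const_zero, if_neg hn1',
              if_neg hn2']; ring
      rw [Finset.sum_congr rfl fun n _ => hrow n, Finset.sum_add_distrib, sum_if_eq, sum_if_eq]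
      ring
  · rw [if_neg hA]
    by_cases hB : p1 = p2 ∧ q1 = q2
    · obtain ⟨h1, h2⟩ := hB
      subst h1; subst h2
      rw [if_pos ⟨rfl, rfl⟩]
      have hpq : ¬ p1 = q1 := fun hh => hA ⟨hh, hh⟩
      have hpq' : ¬ q1 = p1 := fun hh => hpq hh.symm
      have hrow : ∀ n : ZMod d,
          (∑ m : ZMod d, if n = m then (0:ℂ) else tval n m p1 p1 q1 q1)
            = (if n = p1 then -1 else 0) + (if n = q1 then -1 else 0) := by
        intro n
        by_cases hn1 : p1 = n
        · subst hn1
          have h : ∀ m : ZMod d, (if p1 = m then (0:ℂ) else tval p1 m p1 p1 q1 q1)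
              = if m = q1 then -1 else 0 := by
            intro m
            by_cases h1 : p1 = m
            · rw [if_pos h1, if_neg (fun hh => hpq (h1.trans hh))]
            · rw [if_neg h1]
              by_cases h2 : q1 = m
              · subst h2; rw [if_pos rfl]; simp [tval, hpq, hpq']
              · have h2' : ¬ m = q1 := fun hh => h2 hh.symm
                rw [if_neg h2']
                simp [tval, hpq', h1, h2]
          rw [Finset.sum_congr rfl fun m _ => h m, sum_if_eq, if_pos rfl, if_neg hpq]; ring
        · have hn1' : ¬ n = p1 := fun hh => hn1 hh.symm
          by_cases hn2 : q1 = n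
          · subst hn2
            have h : ∀ m : ZMod d, (if q1 = m then (0:ℂ) else tval q1 m p1 p1 q1 q1)
                = if m = p1 then -1 else 0 := by
              intro m
              by_cases h1 : q1 = m
              · rw [if_pos h1, if_neg (fun hh => hpq' (h1.trans hh))]
              · rw [if_neg h1]
                by_cases h2 : p1 = m
                · subst h2; rw [if_pos rfl]; simp [tval, hpq, hpq']
                · have h2' : ¬ m = p1 := fun hh => h2 hh.symm
                  rw [if_neg h2']
                  simp [tval, hpq, hpq', h1, h2]
            rw [Finset.sum_congr rfl fun m _ => h m, sum_if_eq, if_neg hpq', if_pos rfl]; ring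
          · have hn2' : ¬ n = q1 := fun hh => hn2 hh.symm
            have h : ∀ m : ZMod d, (if n = m then (0:ℂ) else tval n m p1 p1 q1 q1) = 0 := by
              intro m
              by_cases h1 : n = m
              · simp [h1]
              · rw [if_neg h1, tval, if_neg, if_neg]
                · rintro (⟨ha, -, -, -⟩ | ⟨-, -, hc, -⟩)
                  · exact hn1 ha
                  · exact hn2 hc
                · rintro ⟨(⟨ha, -⟩ | ⟨ha, hb⟩), -⟩
                  · exact hn1 ha
                  · exact hpq (ha.trans hb.symm)
            rw [Finset.sum_congr rfl fun m _ => h m, Finset.sum_const_zero, if_neg hn1',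
              if_neg hn2']; ring
      rw [Finset.sum_congr rfl fun n _ => hrow n, Finset.sum_add_distrib, sum_if_eq, sum_if_eq]
      ring
    · rw [if_neg hB]
      have h : ∀ n m : ZMod d, (if n = m then (0:ℂ) else tval n m p1 p2 q1 q2) = 0 := by
        intro n m
        by_cases h1 : n = m
        · simp [h1]
        · rw [if_neg h1, tval, if_neg, if_neg]
          · rintro (⟨ha, hb, hc, hd⟩ | ⟨ha, hb, hc, hd⟩)
            · exact hB ⟨ha.trans hb.symm, hc.trans hd.symm⟩
            · exact hB ⟨ha.trans hb.symm, hc.trans hd.symm⟩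
          · rintro ⟨(⟨ha, hb⟩ | ⟨ha, hb⟩), (⟨hc, hd⟩ | ⟨hc, hd⟩)⟩ <;>
              exact hA ⟨ha.trans hb.symm, hc.trans hd.symm⟩
      simp [h]

lemma diag_sum (f : ZMod d × ZMod d → ℝ) (p1 p2 q1 q2 : ZMod d) :
    (∑ i : ZMod d × ZMod d, ((f i : ℂ) • ((eket i.1 ⊗ₖ eket i.2) (p1, p2) (q1, q2))))
      = if p1 = q1 ∧ p2 = q2 then (f (p1, p2) : ℂ) else 0 := by
  rw [Fintype.sum_prod_type]
  have h : ∀ i1 i2 : ZMod d, ((f (i1, i2) : ℂ) • ((eket i1 ⊗ₖ eket i2) (p1, p2) (q1, q2)))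
      = if p1 = q1 ∧ p2 = q2 then
          (if p1 = i1 then (if p2 = i2 then (f (i1, i2) : ℂ) else 0) else 0) else 0 := by
    intro i1 i2
    by_cases hA : p1 = q1 ∧ p2 = q2
    · obtain ⟨ha, hb⟩ := hA
      subst ha; subst hb
      rw [if_pos ⟨rfl, rfl⟩]
      by_cases hi1 : p1 = i1 <;> by_cases hi2 : p2 = i2 <;>
        simp [kroneckerMap_apply, eket_apply, hi1, hi2]
    · rw [if_neg hA]
      rcases not_and_or.mp hA with h1 | h1 <;>
        simp [kroneckerMap_apply, eket_apply, h1]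
  rw [Finset.sum_congr rfl fun i1 _ => Finset.sum_congr rfl fun i2 _ => h i1 i2]
  by_cases hA : p1 = q1 ∧ p2 = q2
  · simp only [if_pos hA]
    simp [Finset.sum_ite_eq]
  · simp [if_neg hA]

lemma pair_block (cab : ℝ) (p1 p2 q1 q2 : ZMod d) :
    (∑ z : (ZMod d × ZMod d) × Fin 4,
        (((if z.1.1 = z.1.2 then (0:ℝ) else cab/2) : ℝ) : ℂ) •
          (((if z.1.1 = z.1.2 then eket (0 : ZMod d) else pmat z.1.1 z.1.2 (phase z.2)) ⊗ₖ
            (if z.1.1 = z.1.2 then eket (0 : ZMod d)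
              else pmat z.1.1 z.1.2 (-(starRingEnd ℂ) (phase z.2)))) (p1, p2) (q1, q2)))
      = (cab/2 : ℂ) * (∑ x : ZMod d × ZMod d, if x.1 = x.2 then (0:ℂ)
          else tval x.1 x.2 p1 p2 q1 q2) := by
  rw [Fintype.sum_prod_type, Finset.mul_sum]
  refine Finset.sum_congr rfl fun x _ => ?_
  dsimp only
  by_cases hx : x.1 = x.2
  · simp [hx]
  · have h : ∀ a : Fin 4,
        (((if x.1 = x.2 then (0:ℝ) else cab/2) : ℝ) : ℂ) •
          (((if x.1 = x.2 then eket (0 : ZMod d) else pmat x.1 x.2 (phase a)) ⊗ₖ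
            (if x.1 = x.2 then eket (0 : ZMod d)
              else pmat x.1 x.2 (-(starRingEnd ℂ) (phase a)))) (p1, p2) (q1, q2))
        = (cab/2 : ℂ) *
            ((pmat x.1 x.2 (phase a) ⊗ₖ pmat x.1 x.2 (-(starRingEnd ℂ) (phase a)))
              (p1, p2) (q1, q2)) := by
      intro a
      rw [if_neg hx, if_neg hx, if_neg hx, smul_eq_mul]
      push_cast
      ring
    rw [Finset.sum_congr rfl fun a _ => h a, ← Finset.mul_sum, pair_sum x.1 x.2 hx, if_neg hx]

lemma isSep_of_decomp {ι : Type} [Fintype ι]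
    (ρ : Matrix (ZMod d × ZMod d) (ZMod d × ZMod d) ℂ)
    (w : ι → ℝ) (σ τ : ι → Matrix (ZMod d) (ZMod d) ℂ)
    (hw : ∀ i, 0 ≤ w i) (hw1 : ∑ i, w i = 1)
    (hσ : ∀ i, (σ i).PosSemidef ∧ (σ i).trace = 1)
    (hτ : ∀ i, (τ i).PosSemidef ∧ (τ i).trace = 1)
    (heq : ρ = ∑ i, (w i : ℂ) • (σ i ⊗ₖ τ i)) : IsSeparableState ρ := by
  obtain ⟨e⟩ : Nonempty (ι ≃ Fin (Fintype.card ι)) := ⟨Fintype.equivFin ι⟩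
  refine ⟨Fintype.card ι, w ∘ e.symm, σ ∘ e.symm, τ ∘ e.symm, fun i => hw _, ?_,
    fun i => hσ _, fun i => hτ _, ?_⟩
  · rw [← hw1]
    exact Fintype.sum_equiv e.symm _ _ fun i => rfl
  · rw [heq]
    exact (Fintype.sum_equiv e.symm _ _ fun i => rfl).symm

end SepAux

open SepAux in
/-- For `d` an odd prime, `c < 0`, and `ρ` a bipartite
density supported in `M` with `ρ_{n1 n2,(n1+k)(n2+k)} = c δ(n1,n2)` for `k ≠ 0`:
if every diagonal entry of `ρ` is at least `|c|(d−1)`, then `ρ` is separable. -/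
theorem special_case_negative_c (d : ℕ) [NeZero d] (hd : d.Prime) (hodd : Odd d)
    (c : ℝ) (hc : c < 0)
    (ρ : Matrix (ZMod d × ZMod d) (ZMod d × ZMod d) ℂ)
    (hρ : ρ.PosSemidef ∧ ρ.trace = 1)
    (hsupp : ∀ j1 j2 k1 k2 : ZMod d, j2 - j1 ≠ k2 - k1 → ρ (j1, j2) (k1, k2) = 0)
    (hval : ∀ k : ZMod d, k ≠ 0 → ∀ n1 n2 : ZMod d,
        ρ (n1, n2) (n1 + k, n2 + k) = (c : ℂ) * (if n1 = n2 then 1 else 0))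
    (hdiag : ∀ i : ZMod d × ZMod d, |c| * ((d : ℝ) - 1) ≤ (ρ i i).re) :
    IsSeparableState ρ := by
  classical
  obtain ⟨hPSD, htr⟩ := hρ
  have hd2 : (2:ℝ) ≤ (d:ℝ) := by exact_mod_cast hd.two_le
  set cab := |c| with hcabdef
  have hcab0 : 0 ≤ cab := abs_nonneg c
  have hcabc : cab = -c := abs_of_neg hc
  -- the components of the separable decomposition
  set ι := (ZMod d × ZMod d) ⊕ ((ZMod d × ZMod d) × Fin 4) with hι
  set W : ι → ℝ := Sum.elim
    (fun p => (ρ p p).re - (if p.1 = p.2 then cab * ((d:ℝ)-1) else cab))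
    (fun x => if x.1.1 = x.1.2 then 0 else cab/2) with hW
  set S : ι → Matrix (ZMod d) (ZMod d) ℂ := Sum.elim
    (fun p => eket p.1)
    (fun x => if x.1.1 = x.1.2 then eket 0 else pmat x.1.1 x.1.2 (phase x.2)) with hS
  set T : ι → Matrix (ZMod d) (ZMod d) ℂ := Sum.elim
    (fun p => eket p.2)
    (fun x => if x.1.1 = x.1.2 then eket 0
      else pmat x.1.1 x.1.2 (-(starRingEnd ℂ) (phase x.2))) with hT
  have hSgood : ∀ i, (S i).PosSemidef ∧ (S i).trace = 1 := by
    rintro (p | ⟨⟨n, m⟩, a⟩)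
    · exact ⟨eket_posSemidef _, eket_trace _⟩
    · simp only [hS, Sum.elim_inr]
      by_cases h : n = m
      · simp only [if_pos h]
        exact ⟨eket_posSemidef _, eket_trace _⟩
      · simp only [if_neg h]
        exact ⟨pmat_posSemidef _ _ _, pmat_trace _ _ h (phase_mul_conj a)⟩
  have hTgood : ∀ i, (T i).PosSemidef ∧ (T i).trace = 1 := by
    rintro (p | ⟨⟨n, m⟩, a⟩)
    · exact ⟨eket_posSemidef _, eket_trace _⟩
    · simp only [hT, Sum.elim_inr]
      by_cases h : n = m
      · simp only [if_pos h]
        exact ⟨eket_posSemidef _, eket_trace _⟩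
      · simp only [if_neg h]
        refine ⟨pmat_posSemidef _ _ _, pmat_trace _ _ h ?_⟩
        rw [map_neg, Complex.conj_conj, neg_mul_neg, mul_comm]
        exact phase_mul_conj a
  have hWpos : ∀ i, 0 ≤ W i := by
    rintro (p | ⟨⟨n, m⟩, a⟩)
    · simp only [hW, Sum.elim_inl]
      rw [sub_nonneg]
      refine le_trans ?_ (hdiag p)
      split
      · exact le_refl _
      · nlinarith
    · simp only [hW, Sum.elim_inr]
      split
      · exact le_refl _
      · positivity
  -- the entrywise identity
  have hmain : ρ = ∑ i : ι, (W i : ℂ) • (S i ⊗ₖ T i) := by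
    ext ⟨p1, p2⟩ ⟨q1, q2⟩
    rw [Matrix.sum_apply, Fintype.sum_sum_type]
    simp only [hW, hS, hT, Sum.elim_inl, Sum.elim_inr, Matrix.smul_apply]
    rw [SepAux.diag_sum, SepAux.pair_block, SepAux.tval_total]
    by_cases hA : p1 = q1 ∧ p2 = q2
    · obtain ⟨ha, hb⟩ := hA
      subst ha; subst hb
      rw [if_pos (show p1 = p1 ∧ p2 = p2 from ⟨rfl, rfl⟩),
        if_pos (show p1 = p1 ∧ p2 = p2 from ⟨rfl, rfl⟩)]
      have hherm : ρ (p1, p2) (p1, p2) = ((ρ (p1, p2) (p1, p2)).re : ℂ) := by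
        have h1 := congrFun (congrFun hPSD.1 (p1, p2)) (p1, p2)
        rw [Matrix.conjTranspose_apply] at h1
        exact (Complex.conj_eq_iff_re.mp h1).symm
      by_cases hp : p1 = p2
      · rw [if_pos hp, if_pos hp]
        conv_lhs => rw [hherm]
        push_cast
        ring
      · rw [if_neg hp, if_neg hp]
        conv_lhs => rw [hherm]
        push_cast
        ring
    · rw [if_neg hA, if_neg hA, zero_add]
      by_cases hB : p1 = p2 ∧ q1 = q2
      · obtain ⟨h1, h2⟩ := hB
        subst h1; subst h2
        rw [if_pos ⟨rfl, rfl⟩]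
        have hk : q1 - p1 ≠ 0 := by
          intro h
          have h' : q1 = p1 := sub_eq_zero.mp h
          exact hA ⟨h'.symm, h'.symm⟩
        have hv := hval (q1 - p1) hk p1 p1
        rw [if_pos rfl, mul_one, show p1 + (q1 - p1) = q1 by ring] at hv
        rw [hv, hcabc]
        push_cast
        ring
      · rw [if_neg hB, mul_zero]
        by_cases hM : p2 - p1 = q2 - q1
        · have hq2 : q2 = p2 + (q1 - p1) := by linear_combination - hM
          have hk : q1 - p1 ≠ 0 := by
            intro h
            have h' : q1 = p1 := sub_eq_zero.mp h
            refine hA ⟨h'.symm, ?_⟩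
            rw [hq2, h, add_zero]
          have hv := hval (q1 - p1) hk p1 p2
          rw [show p1 + (q1 - p1) = q1 by ring, show p2 + (q1 - p1) = q2 from hq2.symm] at hv
          rw [hv]
          have hne : ¬ p1 = p2 := by
            intro h
            refine hB ⟨h, ?_⟩
            rw [hq2, ← h]
            ring
          rw [if_neg hne, mul_zero]
        · exact hsupp p1 p2 q1 q2 hM
  have hsumW : ∑ i, W i = 1 := by
    have h1 : ρ.trace = ∑ i : ι, (W i : ℂ) := by
      rw [hmain, Matrix.trace_sum]
      refine Finset.sum_congr rfl fun i _ => ?_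
      rw [Matrix.trace_smul, Matrix.trace_kronecker, (hSgood i).2, (hTgood i).2]
      simp
    rw [htr] at h1
    have : ((∑ i, W i : ℝ) : ℂ) = 1 := by
      push_cast
      exact h1.symm
    exact_mod_cast this
  exact isSep_of_decomp ρ W S T hWpos hsumW hSgood hTgood hmain
end

section
/- Let d be an odd prime and 0 ≤ λ ≤ 1/(d+1). Then the isotropic state ρ = λ P_+ + ((1−λ)/d²) I_{d²}, where P_+ = (1/d) Σ_{m,n ∈ Z_d} |mm⟩⟨nn| is the projection onto the maximally entangled state, is separable. -/
open Matrix Kronecker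
open scoped ComplexOrder

set_option linter.unusedSectionVars false

namespace IsoSep
variable (d : ℕ)

noncomputable def ζ : ℂ := Complex.exp (2 * Real.pi * Complex.I / d)

noncomputable def ee (x : ZMod d) : ℂ := ζ d ^ x.val

variable [NeZero d]

lemma hζ : IsPrimitiveRoot (ζ d) d := Complex.isPrimitiveRoot_exp d (NeZero.ne d)

lemma ζ_pow_d : ζ d ^ d = 1 := (hζ d).pow_eq_one

lemma ee_zero : ee d 0 = 1 := by simp [ee]

lemma ee_add (x y : ZMod d) : ee d (x + y) = ee d x * ee d y := by
  rw [ee, ee, ee, ← pow_add, ZMod.val_add]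
  conv_rhs => rw [← Nat.div_add_mod (x.val + y.val) d]
  rw [pow_add, pow_mul, ζ_pow_d, one_pow, one_mul]

lemma ee_mul_ee_neg (x : ZMod d) : ee d x * ee d (-x) = 1 := by
  rw [← ee_add]; simp [ee_zero]

lemma ee_ne_zero (x : ZMod d) : ee d x ≠ 0 :=
  fun h => by simpa [h] using ee_mul_ee_neg d x

lemma conj_ee (x : ZMod d) : (starRingEnd ℂ) (ee d x) = ee d (-x) := by
  have h1 : (starRingEnd ℂ) (ζ d) = (ζ d)⁻¹ := by
    rw [ζ, ← Complex.exp_conj, ← Complex.exp_neg]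
    congr 1
    rw [map_div₀]
    simp only [_root_.map_mul, Complex.conj_I, Complex.conj_ofNat, Complex.conj_natCast,
      Complex.conj_ofReal]
    ring
  have h2 : ee d x * (starRingEnd ℂ) (ee d x) = 1 := by
    rw [ee, map_pow, h1, ← mul_pow, mul_inv_cancel₀ ((hζ d).ne_zero (NeZero.ne d)), one_pow]
  have h3 := ee_mul_ee_neg d x
  have hne := ee_ne_zero d x
  calc (starRingEnd ℂ) (ee d x) = (ee d x)⁻¹ := eq_inv_of_mul_eq_one_right h2
    _ = ee d (-x) := by
        symm; exact eq_inv_of_mul_eq_one_right h3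

lemma sum_ee (hd : d.Prime) (t : ZMod d) :
    ∑ k : ZMod d, ee d (k * t) = if t = 0 then (d : ℂ) else 0 := by
  haveI : Fact d.Prime := ⟨hd⟩
  split_ifs with ht
  · simp [ht, ee_zero, Finset.card_univ, ZMod.card]
  · have hbij : ∑ k : ZMod d, ee d (k * t) = ∑ j : ZMod d, ee d j :=
      Fintype.sum_bijective (· * t) (mulRight_bijective₀ t ht) _ _ (fun k => rfl)
    rw [hbij]
    have hval : ∑ j : ZMod d, ee d j = ∑ i ∈ Finset.range d, ζ d ^ i := by
      refine Finset.sum_nbij' (fun j => j.val) (fun i => (i : ZMod d)) ?_ ?_ ?_ ?_ ?_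
      · intro a _; exact Finset.mem_range.mpr (ZMod.val_lt a)
      · intro a _; exact Finset.mem_univ _
      · intro a _; exact ZMod.natCast_rightInverse a
      · intro a ha; exact ZMod.val_natCast_of_lt (Finset.mem_range.mp ha)
      · intro a _; rfl
    rw [hval, (hζ d).geom_sum_eq_zero hd.one_lt]

noncomputable def P (b k : ZMod d) : Matrix (ZMod d) (ZMod d) ℂ :=
  Matrix.of fun m n => (d : ℂ)⁻¹ * (ee d (b*m^2 + k*m) * ee d (-(b*n^2 + k*n)))

lemma P_posSemidef (b k : ZMod d) : (P d b k).PosSemidef := by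
  have h : P d b k =
      (Matrix.of fun (_ : Unit) n => ((Real.sqrt d : ℝ) : ℂ)⁻¹ * ee d (-(b*n^2 + k*n)))ᴴ *
      (Matrix.of fun (_ : Unit) n => ((Real.sqrt d : ℝ) : ℂ)⁻¹ * ee d (-(b*n^2 + k*n))) := by
    ext m n
    simp only [Matrix.mul_apply, Matrix.conjTranspose_apply, Matrix.of_apply, P,
      Finset.univ_unique, Finset.sum_singleton, star_mul']
    have hs1 : star (((Real.sqrt d : ℝ) : ℂ)⁻¹) = ((Real.sqrt d : ℝ) : ℂ)⁻¹ := by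
      rw [star_inv₀, Complex.star_def, Complex.conj_ofReal]
    have hs2 : star (ee d (-(b*m^2 + k*m))) = ee d (b*m^2 + k*m) := by
      rw [Complex.star_def, conj_ee, neg_neg]
    rw [hs1, hs2]
    have hsq : ((Real.sqrt d : ℝ) : ℂ)⁻¹ * ((Real.sqrt d : ℝ) : ℂ)⁻¹ = (d : ℂ)⁻¹ := by
      rw [← mul_inv, ← Complex.ofReal_mul, Real.mul_self_sqrt (Nat.cast_nonneg d),
        Complex.ofReal_natCast]
    linear_combination (-(ee d (b * m ^ 2 + k * m) * ee d (-(b * n ^ 2 + k * n)))) * hsq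
  rw [h]
  exact Matrix.posSemidef_conjTranspose_mul_self _

lemma P_trace (b k : ZMod d) : (P d b k).trace = 1 := by
  have hd0 : (d : ℂ) ≠ 0 := Nat.cast_ne_zero.mpr (NeZero.ne d)
  simp only [Matrix.trace, Matrix.diag, P, Matrix.of_apply]
  rw [Finset.sum_congr rfl (fun m _ => by rw [ee_mul_ee_neg, mul_one])]
  simp [Finset.card_univ, ZMod.card, hd0]

lemma std_posSemidef (m : ZMod d) : (Matrix.single m m (1 : ℂ)).PosSemidef := by
  have h : Matrix.single m m (1 : ℂ) =
      (Matrix.single m m (1 : ℂ))ᴴ * Matrix.single m m (1 : ℂ) := by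
    ext a b
    simp [Matrix.mul_apply, Matrix.conjTranspose_apply, Matrix.single, Matrix.of_apply,
      Finset.sum_ite_eq, ite_and]
    aesop
  rw [h]; exact Matrix.posSemidef_conjTranspose_mul_self _

lemma std_trace (m : ZMod d) : (Matrix.single m m (1 : ℂ)).trace = 1 :=
  Matrix.trace_single_eq_same (n := ZMod d) (α := ℂ) m 1

lemma sum_std_kron :
    ∑ m : ZMod d, ∑ n : ZMod d,
      (Matrix.single m m (1 : ℂ)) ⊗ₖ (Matrix.single n n (1 : ℂ)) =
    (1 : Matrix (ZMod d × ZMod d) (ZMod d × ZMod d) ℂ) := by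
  ext ⟨a, α⟩ ⟨c, γ⟩
  simp only [Matrix.sum_apply, Matrix.kroneckerMap_apply, Matrix.single,
    Matrix.of_apply, Matrix.one_apply, Prod.mk.injEq, ite_and]
  rw [Finset.sum_eq_single a, Finset.sum_eq_single α] <;> aesop

lemma two_ne_zero' (hd : d.Prime) (hodd : Odd d) : (2 : ZMod d) ≠ 0 := by
  intro h
  have : (d : ℕ) ∣ 2 := by
    have := (ZMod.natCast_eq_zero_iff 2 d).mp (by exact_mod_cast h)
    exact this
  have hd2 : d = 2 := (Nat.prime_dvd_prime_iff_eq hd Nat.prime_two).mp this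
  rw [hd2] at hodd
  simp [Nat.odd_iff] at hodd

lemma quad (hd : d.Prime) (hodd : Odd d) (a c α γ : ZMod d)
    (ht : a - c - α + γ = 0) (hs : a^2 - c^2 - α^2 + γ^2 = 0) :
    (a = c ∧ α = γ) ∨ (a = α ∧ c = γ) := by
  haveI : Fact d.Prime := ⟨hd⟩
  by_cases hac : a = c
  · left
    refine ⟨hac, ?_⟩
    have h0 : a - c = 0 := sub_eq_zero.mpr hac
    have : α - γ = 0 := by linear_combination -ht + h0
    exact sub_eq_zero.mp this
  · right
    have hu : a - c ≠ 0 := sub_ne_zero.mpr hac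
    have h1 : a - c = α - γ := by linear_combination ht
    have h2 : (a - c) * (a + c) = (α - γ) * (α + γ) := by linear_combination hs
    have h3 : a + c = α + γ := by
      have := h2
      rw [← h1] at this
      exact mul_left_cancel₀ hu this
    have h4 : 2 * a = 2 * α := by linear_combination h1 + h3
    have ha : a = α := mul_left_cancel₀ (two_ne_zero' d hd hodd) h4
    constructor
    · exact ha
    · have : c = γ := by linear_combination h3 - ha
      exact this

lemma key (hd : d.Prime) (hodd : Odd d) :
    (∑ b : ZMod d, ∑ k : ZMod d, P d b k ⊗ₖ P d (-b) (-k))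
      + ∑ m : ZMod d, (Matrix.single m m (1:ℂ)) ⊗ₖ (Matrix.single m m (1:ℂ))
    = 1 + ∑ m : ZMod d, ∑ n : ZMod d,
        Matrix.single ((m,m) : ZMod d × ZMod d) ((n,n) : ZMod d × ZMod d) (1:ℂ) := by
  have hd0 : (d : ℂ) ≠ 0 := Nat.cast_ne_zero.mpr (NeZero.ne d)
  ext ⟨a, α⟩ ⟨c, γ⟩
  simp only [Matrix.add_apply, Matrix.sum_apply, Matrix.kroneckerMap_apply]
  set s : ZMod d := a^2 - c^2 - α^2 + γ^2 with hs
  set t : ZMod d := a - c - α + γ with ht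
  have hterm : ∀ b k : ZMod d, P d b k a c * P d (-b) (-k) α γ
      = (d:ℂ)⁻¹ * (d:ℂ)⁻¹ * (ee d (b*s) * ee d (k*t)) := by
    intro b k
    calc P d b k a c * P d (-b) (-k) α γ
        = (d:ℂ)⁻¹ * (d:ℂ)⁻¹ * (ee d (b*a^2+k*a) * ee d (-(b*c^2+k*c)) *
            (ee d ((-b)*α^2+(-k)*α) * ee d (-((-b)*γ^2+(-k)*γ)))) := by
          simp only [P, Matrix.of_apply]; ring
      _ = (d:ℂ)⁻¹ * (d:ℂ)⁻¹ * ee d ((b*a^2+k*a) + -(b*c^2+k*c) +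
            ((-b)*α^2+(-k)*α) + -((-b)*γ^2+(-k)*γ)) := by
          rw [← ee_add, ← ee_add, ← ee_add]; ring_nf
      _ = (d:ℂ)⁻¹ * (d:ℂ)⁻¹ * (ee d (b*s) * ee d (k*t)) := by
          rw [← ee_add]; congr 1; rw [hs, ht]; ring
  rw [Finset.sum_congr rfl fun b _ => Finset.sum_congr rfl fun k _ => hterm b k]
  have hfact : ∑ b : ZMod d, ∑ k : ZMod d, (d:ℂ)⁻¹ * (d:ℂ)⁻¹ * (ee d (b*s) * ee d (k*t))
      = (d:ℂ)⁻¹ * (d:ℂ)⁻¹ * ((∑ b : ZMod d, ee d (b*s)) * (∑ k : ZMod d, ee d (k*t))) := by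
    rw [Finset.sum_mul_sum]
    rw [Finset.mul_sum]
    refine Finset.sum_congr rfl fun b _ => ?_
    rw [Finset.mul_sum]
  rw [hfact, sum_ee d hd s, sum_ee d hd t]
  have hL2 : ∑ m : ZMod d, (Matrix.single m m (1:ℂ)) a c *
      (Matrix.single m m (1:ℂ)) α γ = if a = c ∧ a = α ∧ a = γ then 1 else 0 := by
    simp only [Matrix.single, Matrix.of_apply]
    rw [Finset.sum_eq_single a] <;> aesop
  have hR2 : ∑ m : ZMod d, ∑ n : ZMod d,
      (Matrix.single ((m,m) : ZMod d × ZMod d) ((n,n) : ZMod d × ZMod d) (1:ℂ)) (a,α) (c,γ)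
      = if a = α ∧ c = γ then 1 else 0 := by
    simp only [Matrix.single, Matrix.of_apply, Prod.mk.injEq]
    rw [Finset.sum_eq_single a]
    · rw [Finset.sum_eq_single c] <;> aesop
    · intro m _ hm
      rw [Finset.sum_eq_zero]; intro n _; aesop
    · aesop
  rw [hL2, hR2, Matrix.one_apply]
  simp only [Prod.mk.injEq]
  by_cases h1 : a = c ∧ α = γ <;> by_cases h2 : a = α ∧ c = γ
  · obtain ⟨rfl, rfl⟩ := h1
    obtain ⟨rfl, -⟩ := h2
    have hs0 : s = 0 := by rw [hs]; ring
    have ht0 : t = 0 := by rw [ht]; ring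
    simp [hs0, ht0, hd0]
    field_simp
  · obtain ⟨rfl, rfl⟩ := h1
    have hs0 : s = 0 := by rw [hs]; ring
    have ht0 : t = 0 := by rw [ht]; ring
    have haα : a ≠ α := fun h => h2 ⟨h, h⟩
    simp [hs0, ht0, hd0, haα]
    field_simp
  · obtain ⟨rfl, rfl⟩ := h2
    have hs0 : s = 0 := by rw [hs]; ring
    have ht0 : t = 0 := by rw [ht]; ring
    have hac : a ≠ c := fun h => h1 ⟨h, h⟩
    simp [hs0, ht0, hd0, hac]
    field_simp
  · have hne : ¬(a = c ∧ a = α ∧ a = γ) := by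
      rintro ⟨rfl, rfl, rfl⟩; exact h1 ⟨rfl, rfl⟩
    have hst : ¬(s = 0) ∨ ¬(t = 0) := by
      by_contra hcon
      push_neg at hcon
      rcases quad d hd hodd a c α γ (by rw [← ht]; exact hcon.2) (by rw [← hs]; exact hcon.1) with h | h
      · exact h1 h
      · exact h2 h
    rcases hst with h | h <;> simp [h, hne, h1, h2]

end IsoSep

/-- For `d` an odd prime and `0 ≤ λ ≤ 1/(d+1)`, the isotropic
state `ρ = λ P_+ + ((1−λ)/d²) I_{d²}` with
`P_+ = (1/d) Σ_{m,n} |mm⟩⟨nn|` is separable. -/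
theorem isotropic_separable (d : ℕ) [NeZero d] (hd : d.Prime) (hodd : Odd d)
    (lam : ℝ) (h0 : 0 ≤ lam) (h1 : lam ≤ 1 / ((d : ℝ) + 1))
    (ρ : Matrix (ZMod d × ZMod d) (ZMod d × ZMod d) ℂ)
    (hρ : ρ = (lam : ℂ) •
          ((d : ℂ)⁻¹ • ∑ m : ZMod d, ∑ n : ZMod d, Matrix.single (m, m) (n, n) (1 : ℂ))
        + (((1 - lam) / (d : ℝ) ^ 2 : ℝ) : ℂ) • (1 : Matrix (ZMod d × ZMod d) (ZMod d × ZMod d) ℂ)) :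
    IsSeparableState ρ := by

  classical
  have hdR : (0 : ℝ) < d := by exact_mod_cast hd.pos
  have hdR0 : (d : ℝ) ≠ 0 := ne_of_gt hdR
  have hdC0 : (d : ℂ) ≠ 0 := Nat.cast_ne_zero.mpr (NeZero.ne d)
  set c : ℝ := (1 - lam * ((d : ℝ) + 1)) / (d : ℝ)^2 with hc
  have hlam1 : lam * ((d : ℝ) + 1) ≤ 1 := by
    rw [← le_div_iff₀ (by positivity)] at *
    exact h1
  have hcnn : 0 ≤ c := by
    apply div_nonneg
    · linarith
    · positivity
  let ι := (ZMod d × ZMod d) ⊕ ((ZMod d) ⊕ (ZMod d × ZMod d))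
  let W : ι → ℝ := Sum.elim (fun _ => lam / d)
    (Sum.elim (fun _ => lam / d) (fun _ => c))
  let S : ι → Matrix (ZMod d) (ZMod d) ℂ :=
    Sum.elim (fun bk => IsoSep.P d bk.1 bk.2)
      (Sum.elim (fun k => Matrix.single k k 1)
        (fun mn => Matrix.single mn.1 mn.1 1))
  let T : ι → Matrix (ZMod d) (ZMod d) ℂ :=
    Sum.elim (fun bk => IsoSep.P d (-bk.1) (-bk.2))
      (Sum.elim (fun k => Matrix.single k k 1)
        (fun mn => Matrix.single mn.2 mn.2 1))
  let eqv : Fin (Fintype.card ι) ≃ ι := (Fintype.equivFin ι).symm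
  refine ⟨Fintype.card ι, W ∘ eqv, S ∘ eqv, T ∘ eqv, ?_, ?_, ?_, ?_, ?_⟩
  · intro i
    rcases hx : eqv i with bk | k | mn <;>
      simp only [W, Function.comp_apply, hx, Sum.elim_inl, Sum.elim_inr] <;> positivity
  · rw [show ∑ i, (W ∘ eqv) i = ∑ x : ι, W x from Equiv.sum_comp eqv W]
    rw [Fintype.sum_sum_type, Fintype.sum_sum_type]
    simp only [W, Sum.elim_inl, Sum.elim_inr, Finset.sum_const, Finset.card_univ,
      Fintype.card_prod, ZMod.card, nsmul_eq_mul]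
    rw [hc]
    field_simp
    push_cast
    ring
  · intro i
    rcases hx : eqv i with bk | k | mn <;>
      simp only [S, Function.comp_apply, hx, Sum.elim_inl, Sum.elim_inr]
    · exact ⟨IsoSep.P_posSemidef d _ _, IsoSep.P_trace d _ _⟩
    · exact ⟨IsoSep.std_posSemidef d _, IsoSep.std_trace d _⟩
    · exact ⟨IsoSep.std_posSemidef d _, IsoSep.std_trace d _⟩
  · intro i
    rcases hx : eqv i with bk | k | mn <;>
      simp only [T, Function.comp_apply, hx, Sum.elim_inl, Sum.elim_inr]
    · exact ⟨IsoSep.P_posSemidef d _ _, IsoSep.P_trace d _ _⟩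
    · exact ⟨IsoSep.std_posSemidef d _, IsoSep.std_trace d _⟩
    · exact ⟨IsoSep.std_posSemidef d _, IsoSep.std_trace d _⟩
  · rw [show ∑ i, ((W ∘ eqv) i : ℂ) • ((S ∘ eqv) i ⊗ₖ (T ∘ eqv) i)
        = ∑ x : ι, (W x : ℂ) • (S x ⊗ₖ T x) from
      Equiv.sum_comp eqv (fun x => (W x : ℂ) • (S x ⊗ₖ T x))]
    rw [Fintype.sum_sum_type, Fintype.sum_sum_type]
    simp only [W, S, T, Sum.elim_inl, Sum.elim_inr]
    rw [← Finset.smul_sum, ← Finset.smul_sum, ← Finset.smul_sum]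
    have hkron : ∑ mn : ZMod d × ZMod d,
        (Matrix.single mn.1 mn.1 (1:ℂ)) ⊗ₖ (Matrix.single mn.2 mn.2 1) = 1 := by
      rw [Fintype.sum_prod_type]; exact IsoSep.sum_std_kron d
    have hP : ∑ bk : ZMod d × ZMod d, (IsoSep.P d bk.1 bk.2 ⊗ₖ IsoSep.P d (-bk.1) (-bk.2))
        = ∑ b : ZMod d, ∑ k : ZMod d, IsoSep.P d b k ⊗ₖ IsoSep.P d (-b) (-k) :=
      Fintype.sum_prod_type _
    rw [hkron, hP]
    have hkey := IsoSep.key d hd hodd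
    have hA : ∑ b : ZMod d, ∑ k : ZMod d, IsoSep.P d b k ⊗ₖ IsoSep.P d (-b) (-k)
        = 1 + (∑ m : ZMod d, ∑ n : ZMod d,
            Matrix.single ((m,m) : ZMod d × ZMod d) ((n,n) : ZMod d × ZMod d) (1:ℂ))
          - ∑ m : ZMod d, (Matrix.single m m (1:ℂ)) ⊗ₖ (Matrix.single m m 1) := by
      rw [← hkey]; abel
    rw [hA, hρ]
    match_scalars <;> (try simp only [hc]) <;> push_cast <;> field_simp <;> (try push_cast) <;> ring
end
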